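/- arXiv:2502.07041 — 6 statements merged into one kernel-verified Lean document; each statement's English description precedes it below -/
import Mathlib

section
/- Let 0 < d < 1/2, let i ∈ ℕ, and let y_1, …, y_i ∈ L^1[0,1]. Then there exists a selection of signs η'_1, …, η'_i ∈ {-1, 1} such that d · 2^{-i} · Σ_{l=1}^i ‖y_l‖_{L^1} ≤ K(2^{-i}, Σ_{l=1}^i η'_l y_l; L^1, L^∞). -/
open MeasureTheory
open scoped ENNReal

/-- Lebesgue measure restricted to `[0,1]`. -/
noncomputable def mu01 : Measure ℝ := volume.restrict (Set.Icc 0 1)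

/-- The weight `W_p(t) = (log(e/t))^{1-p}` for `t ∈ (0,1]`, `W_p(0)=0`. -/
noncomputable def Wp (p t : ℝ) : ℝ :=
  if t = 0 then 0 else Real.log (Real.exp 1 / t) ^ (1 - p)

/-- The norm of the Lorentz space `X_p` on `[0,1]`:
`‖f‖_{X_p} = (∫_0^∞ W_p(μ{s ∈ [0,1] : |f s|^p > λ}) dλ)^{1/p}`. -/
noncomputable def XpNorm (p : ℝ) (f : ℝ → ℝ) : ℝ≥0∞ :=
  (∫⁻ lam in Set.Ioi (0 : ℝ),
      ENNReal.ofReal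
        (Wp p (volume {s : ℝ | s ∈ Set.Icc (0 : ℝ) 1 ∧ lam < |f s| ^ p}).toReal)) ^ (1 / p)

/-- Luxemburg norm of the exponential Orlicz space `Exp L^α` on `[0,1]`. -/
noncomputable def expLNorm (α : ℝ) (f : ℝ → ℝ) : ℝ≥0∞ :=
  ⨅ (lam : ℝ) (_ : 0 < lam ∧
      ∫⁻ t, ENNReal.ofReal (Real.exp ((|f t| / lam) ^ α) - 1) ∂mu01 ≤ 1),
    ENNReal.ofReal lam

/-- Weak `ℓ^q` quasinorm of a finite family of reals. -/
noncomputable def weakLq (q : ℝ) {n : ℕ} (a : Fin n → ℝ) : ℝ :=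
  ⨆ t : Set.Ioi (0 : ℝ), t.1 * (Nat.card {k : Fin n // t.1 < |a k|} : ℝ) ^ (1 / q)

/-- Weak `ℓ^q` quasinorm of a sequence with values in `[0,∞]`, cardinalities
taken via the counting measure on `ℕ`. -/
noncomputable def weakLqSeq (q : ℝ) (a : ℕ → ℝ≥0∞) : ℝ≥0∞ :=
  ⨆ t : Set.Ioi (0 : ℝ),
    ENNReal.ofReal t.1 * Measure.count {k : ℕ | ENNReal.ofReal t.1 < a k} ^ (1 / q)

/-- Peetre `K`-functional for the couple `(L^1[0,1], L^∞[0,1])`. -/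
noncomputable def Kfun (τ : ℝ) (f : ℝ → ℝ) : ℝ≥0∞ :=
  ⨅ (g : ℝ → ℝ) (h : ℝ → ℝ) (_ : f = g + h),
    eLpNorm g 1 mu01 + ENNReal.ofReal τ * eLpNorm h ⊤ mu01

/-- The Rademacher functions `r_k(t) = sgn(sin(2^k π t))`. -/
noncomputable def rademacher (k : ℕ) (t : ℝ) : ℝ :=
  Real.sign (Real.sin (2 ^ k * Real.pi * t))

/-- Marcinkiewicz space norm `‖f‖_{M_φ} = sup_{0<t≤1} (φ(t)/t) K(t,f;L^1,L^∞)`. -/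
noncomputable def MNorm (φ : ℝ → ℝ) (f : ℝ → ℝ) : ℝ≥0∞ :=
  ⨆ t : {t : ℝ // 0 < t ∧ t ≤ 1}, ENNReal.ofReal (φ t.1 / t.1) * Kfun t.1 f

lemma mu01_univ : mu01 Set.univ = 1 := by
  simp [mu01, Real.volume_Icc]

lemma setLIntegral_abs_le_mul_Kfun (t₀ : ℝ) (ht : 0 < t₀) (f : ℝ → ℝ) (Ω : Set ℝ) :
    ∫⁻ x in Ω, ENNReal.ofReal |f x| ∂mu01 ≤
      (1 + (ENNReal.ofReal t₀)⁻¹ * mu01 Ω) * Kfun t₀ f := by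
  set c : ℝ≥0∞ := (ENNReal.ofReal t₀)⁻¹ with hc
  have ht0' : ENNReal.ofReal t₀ ≠ 0 := by
    simp [ENNReal.ofReal_eq_zero, not_le, ht]
  have hc_top : c ≠ ∞ := by
    simp [hc, ENNReal.inv_ne_top, ht0']
  have hμ : mu01 Ω ≠ ∞ := by
    refine ne_top_of_le_ne_top ?_ (measure_mono (Set.subset_univ Ω))
    rw [mu01_univ]; exact ENNReal.one_ne_top
  set C1 : ℝ≥0∞ := 1 + c * mu01 Ω with hC1
  have hC1_0 : C1 ≠ 0 := by simp [hC1]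
  have hC1_top : C1 ≠ ∞ := by
    exact ENNReal.add_ne_top.mpr ⟨ENNReal.one_ne_top, ENNReal.mul_ne_top hc_top hμ⟩
  set L : ℝ≥0∞ := ∫⁻ x in Ω, ENNReal.ofReal |f x| ∂mu01 with hL
  have key : ∀ g h : ℝ → ℝ, f = g + h →
      L ≤ C1 * (eLpNorm g 1 mu01 + ENNReal.ofReal t₀ * eLpNorm h ⊤ mu01) := by
    intro g h hf
    set E : ℝ≥0∞ := eLpNormEssSup h mu01 with hE
    have hEh : eLpNorm h ⊤ mu01 = E := eLpNorm_exponent_top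
    have haeb : ∀ᵐ x ∂mu01, ENNReal.ofReal |f x| ≤ ENNReal.ofReal |g x| + E := by
      filter_upwards [ae_le_eLpNormEssSup (f := h) (μ := mu01)] with x hx
      have hfx : f x = g x + h x := by rw [hf]; rfl
      calc ENNReal.ofReal |f x| ≤ ENNReal.ofReal (|g x| + |h x|) := by
            apply ENNReal.ofReal_le_ofReal; rw [hfx]; exact abs_add_le _ _
        _ = ENNReal.ofReal |g x| + ENNReal.ofReal |h x| :=
            ENNReal.ofReal_add (abs_nonneg _) (abs_nonneg _)
        _ ≤ ENNReal.ofReal |g x| + E := by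
            refine add_le_add_right ?_ _
            rw [← Real.enorm_eq_ofReal_abs]; exact hx
    have h1 : L ≤ ∫⁻ x in Ω, (ENNReal.ofReal |g x| + E) ∂mu01 :=
      lintegral_mono_ae (ae_restrict_of_ae haeb)
    have h2 : ∫⁻ x in Ω, (ENNReal.ofReal |g x| + E) ∂mu01
        = (∫⁻ x in Ω, ENNReal.ofReal |g x| ∂mu01) + E * mu01 Ω := by
      rw [lintegral_add_right _ measurable_const, lintegral_const,
        Measure.restrict_apply_univ]
    have h3 : ∫⁻ x in Ω, ENNReal.ofReal |g x| ∂mu01 ≤ eLpNorm g 1 mu01 := by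
      rw [eLpNorm_one_eq_lintegral_enorm]
      simp_rw [Real.enorm_eq_ofReal_abs]
      exact setLIntegral_le_lintegral _ _
    have h4 : E * mu01 Ω ≤ C1 * (ENNReal.ofReal t₀ * E) := by
      have hce : c * ENNReal.ofReal t₀ = 1 :=
        ENNReal.inv_mul_cancel ht0' ENNReal.ofReal_ne_top
      have : E * mu01 Ω = (c * mu01 Ω) * (ENNReal.ofReal t₀ * E) := by
        rw [mul_mul_mul_comm, hce]; ring
      rw [this]
      exact mul_le_mul_left le_add_self _
    calc L ≤ (∫⁻ x in Ω, ENNReal.ofReal |g x| ∂mu01) + E * mu01 Ω := h2 ▸ h1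
      _ ≤ eLpNorm g 1 mu01 + C1 * (ENNReal.ofReal t₀ * E) := add_le_add h3 h4
      _ ≤ C1 * eLpNorm g 1 mu01 + C1 * (ENNReal.ofReal t₀ * E) := by
          refine add_le_add_left ?_ _
          exact le_mul_of_one_le_left zero_le' (by simp [hC1])
      _ = C1 * (eLpNorm g 1 mu01 + ENNReal.ofReal t₀ * eLpNorm h ⊤ mu01) := by
          rw [hEh, mul_add]
  have h5 : C1⁻¹ * L ≤ Kfun t₀ f := by
    refine le_iInf fun g => le_iInf fun h => le_iInf fun hf => ?_
    calc C1⁻¹ * L ≤ C1⁻¹ * (C1 * (eLpNorm g 1 mu01 + ENNReal.ofReal t₀ * eLpNorm h ⊤ mu01)) :=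
          mul_le_mul_right (key g h hf) _
      _ = _ := by rw [← mul_assoc, ENNReal.inv_mul_cancel hC1_0 hC1_top, one_mul]
  calc L = C1 * (C1⁻¹ * L) := by
        rw [← mul_assoc, ENNReal.mul_inv_cancel hC1_0 hC1_top, one_mul]
    _ ≤ C1 * Kfun t₀ f := mul_le_mul_right h5 _


/-- Lemma: for `0 < d < 1/2`, `i ∈ ℕ` and `y_1, …, y_i ∈ L^1[0,1]` there are
signs `η'_l = ±1` with `d 2^{-i} ∑ ‖y_l‖_1 ≤ K(2^{-i}, ∑ η'_l y_l; L^1, L^∞)`. -/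
theorem exists_signs_K_lower_bound (d : ℝ) (hd : 0 < d) (hd2 : d < 1 / 2) (i : ℕ)
    (y : Fin i → ℝ → ℝ) (hy : ∀ l, Integrable (y l) mu01) :
    ∃ η : Fin i → ℝ, (∀ l, η l = 1 ∨ η l = -1) ∧
      ENNReal.ofReal (d * ((2 : ℝ) ^ i)⁻¹ * ∑ l, (eLpNorm (y l) 1 mu01).toReal) ≤
        Kfun ((2 : ℝ) ^ i)⁻¹ (fun t => ∑ l, η l * y l t) := by
  classical
  set y' : Fin i → ℝ → ℝ := fun l => (hy l).aestronglyMeasurable.mk (y l) with hy'def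
  have hm : ∀ l, Measurable (y' l) :=
    fun l => ((hy l).aestronglyMeasurable.stronglyMeasurable_mk).measurable
  have hae : ∀ᵐ x ∂mu01, ∀ l, y l x = y' l x :=
    ae_all_iff.mpr fun l => (hy l).aestronglyMeasurable.ae_eq_mk
  set sg : Bool → ℝ := fun b => if b then 1 else -1 with hsg
  set S : (Fin i → Bool) → ℝ → ℝ := fun σ x => ∑ l, sg (σ l) * y l x with hS
  set t₀ : ℝ := ((2 : ℝ) ^ i)⁻¹ with ht₀def
  have ht₀ : 0 < t₀ := by positivity
  obtain ⟨σs, hσs⟩ := Finite.exists_max (fun σ : Fin i → Bool => Kfun t₀ (S σ))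
  set Kmax : ℝ≥0∞ := Kfun t₀ (S σs) with hKmax
  refine ⟨fun l => sg (σs l), fun l => by by_cases h : σs l <;> simp [hsg, h], ?_⟩
  -- the partition
  set S' : (Fin i → Bool) → ℝ → ℝ := fun σ x => ∑ l, sg (σ l) * y' l x with hS'
  set φ : ℝ → Fin i → Bool := fun x l => decide (0 ≤ y' l x) with hφ
  set Ω : (Fin i → Bool) → Set ℝ := fun σ => {x | φ x = σ} with hΩdef
  have hΩ : ∀ σ, MeasurableSet (Ω σ) := by
    intro σ
    have h1 : Ω σ = ⋂ l, {x | φ x l = σ l} := by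
      ext x; simp [hΩdef, funext_iff]
    rw [h1]
    refine MeasurableSet.iInter fun l => ?_
    have hmeas : MeasurableSet {x : ℝ | 0 ≤ y' l x} :=
      measurableSet_le measurable_const (hm l)
    rcases Bool.dichotomy (σ l) with hb | hb <;> rw [hb]
    · have : {x | φ x l = false} = {x : ℝ | 0 ≤ y' l x}ᶜ := by
        ext x; simp [hφ]
      rw [this]; exact hmeas.compl
    · have : {x | φ x l = true} = {x : ℝ | 0 ≤ y' l x} := by
        ext x; simp [hφ]
      rw [this]; exact hmeas
  have hpart : ∀ (v : ℝ → ℝ≥0∞) (x : ℝ), ∑ σ, (Ω σ).indicator v x = v x := by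
    intro v x
    have hne : ∀ σ : Fin i → Bool, σ ≠ φ x → (Ω σ).indicator v x = 0 := by
      intro σ hσ
      apply Set.indicator_of_notMem
      intro hmem
      have hx2 : φ x = σ := by simpa [hΩdef] using hmem
      exact hσ hx2.symm
    rw [Fintype.sum_eq_single (φ x) hne]
    exact Set.indicator_of_mem (by simp [hΩdef]) v
  set A : ℝ → ℝ := fun x => ∑ l, |y' l x| with hA
  have hAmeas : Measurable fun x => ENNReal.ofReal (A x) := by
    apply Measurable.ennreal_ofReal
    exact Finset.measurable_sum _ fun l _ => (hm l).abs
  -- Step 1/2 : sum of norms equals lintegral of A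
  have step2 : ∑ l, eLpNorm (y l) 1 mu01 = ∫⁻ x, ENNReal.ofReal (A x) ∂mu01 := by
    have step1 : ∀ l, eLpNorm (y l) 1 mu01 = ∫⁻ x, ENNReal.ofReal |y' l x| ∂mu01 := by
      intro l
      rw [eLpNorm_one_eq_lintegral_enorm]
      refine lintegral_congr_ae (hae.mono fun x hx => ?_)
      show (‖y l x‖ₑ : ℝ≥0∞) = ENNReal.ofReal |y' l x|
      rw [Real.enorm_eq_ofReal_abs, hx l]
    simp_rw [step1]
    rw [← lintegral_finset_sum _ (fun l _ => ((hm l).abs).ennreal_ofReal)]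
    refine lintegral_congr fun x => ?_
    rw [hA, ENNReal.ofReal_sum_of_nonneg fun l _ => abs_nonneg _]
  -- Step 3 : split along the partition
  have step3 : ∫⁻ x, ENNReal.ofReal (A x) ∂mu01
      = ∑ σ, ∫⁻ x in Ω σ, ENNReal.ofReal (A x) ∂mu01 := by
    have h1 : ∫⁻ x, ENNReal.ofReal (A x) ∂mu01
        = ∫⁻ x, ∑ σ, (Ω σ).indicator (fun x => ENNReal.ofReal (A x)) x ∂mu01 :=
      lintegral_congr fun x => (hpart (fun x => ENNReal.ofReal (A x)) x).symm
    rw [h1, lintegral_finset_sum _ (fun σ _ => hAmeas.indicator (hΩ σ))]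
    exact Finset.sum_congr rfl fun σ _ => lintegral_indicator (hΩ σ) _
  -- Step 4 : on Ω σ, A = |S σ| a.e.
  have step4 : ∀ σ, ∫⁻ x in Ω σ, ENNReal.ofReal (A x) ∂mu01
      = ∫⁻ x in Ω σ, ENNReal.ofReal |S σ x| ∂mu01 := by
    intro σ
    have e1 : ∫⁻ x in Ω σ, ENNReal.ofReal (A x) ∂mu01
        = ∫⁻ x in Ω σ, ENNReal.ofReal |S' σ x| ∂mu01 := by
      refine setLIntegral_congr_fun (hΩ σ) (fun x hx => ?_)
      have hxσ : φ x = σ := hx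
      have hterm : ∀ l, sg (σ l) * y' l x = |y' l x| := by
        intro l
        rw [← hxσ]
        by_cases h0 : 0 ≤ y' l x
        · simp [hφ, h0, hsg, abs_of_nonneg h0]
        · simp [hφ, h0, hsg, abs_of_neg (lt_of_not_ge h0)]
      have hSA : S' σ x = A x := by
        rw [hS', hA]
        exact Finset.sum_congr rfl fun l _ => hterm l
      rw [hSA, abs_of_nonneg]
      rw [hA]
      exact Finset.sum_nonneg fun l _ => abs_nonneg _
    have e2 : ∫⁻ x in Ω σ, ENNReal.ofReal |S' σ x| ∂mu01
        = ∫⁻ x in Ω σ, ENNReal.ofReal |S σ x| ∂mu01 := by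
      refine lintegral_congr_ae (ae_restrict_of_ae (hae.mono fun x hx => ?_))
      have h' : S σ x = S' σ x := Finset.sum_congr rfl fun l _ => by rw [hx l]
      show ENNReal.ofReal |S' σ x| = ENNReal.ofReal |S σ x|
      rw [h']
    rw [e1, e2]
  -- Step 5 : per-σ estimate
  have step5 : ∀ σ, ∫⁻ x in Ω σ, ENNReal.ofReal |S σ x| ∂mu01
      ≤ (1 + (ENNReal.ofReal t₀)⁻¹ * mu01 (Ω σ)) * Kmax :=
    fun σ => (setLIntegral_abs_le_mul_Kfun t₀ ht₀ (S σ) (Ω σ)).trans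
      (mul_le_mul_right (hσs σ) _)
  -- counting
  have hcount : ∑ _σ : Fin i → Bool, (1 : ℝ≥0∞) = (2 : ℝ≥0∞) ^ i := by
    rw [Finset.sum_const, Finset.card_univ]
    simp [Fintype.card_fun]
  have hmeasum : ∑ σ, mu01 (Ω σ) = 1 := by
    have h1 : ∀ σ, mu01 (Ω σ)
        = ∫⁻ x, (Ω σ).indicator (fun _ => (1 : ℝ≥0∞)) x ∂mu01 := by
      intro σ; rw [lintegral_indicator_const (hΩ σ), one_mul]
    simp_rw [h1]
    rw [← lintegral_finset_sum _ (fun σ _ => measurable_const.indicator (hΩ σ))]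
    have h2 : ∀ x : ℝ, ∑ σ, (Ω σ).indicator (fun _ => (1 : ℝ≥0∞)) x = 1 :=
      fun x => hpart _ x
    rw [lintegral_congr h2, lintegral_one, mu01_univ]
  have hcoef : (ENNReal.ofReal t₀)⁻¹ = (2 : ℝ≥0∞) ^ i := by
    rw [ht₀def, ENNReal.ofReal_inv_of_pos (by positivity), inv_inv,
      ENNReal.ofReal_pow (by norm_num)]
    norm_num
  -- main estimate
  have main : ∑ l, eLpNorm (y l) 1 mu01 ≤ (2 : ℝ≥0∞) ^ (i + 1) * Kmax := by
    rw [step2, step3]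
    calc ∑ σ, ∫⁻ x in Ω σ, ENNReal.ofReal (A x) ∂mu01
        ≤ ∑ σ, (1 + (ENNReal.ofReal t₀)⁻¹ * mu01 (Ω σ)) * Kmax :=
          Finset.sum_le_sum fun σ _ => (step4 σ) ▸ step5 σ
      _ = (∑ σ, (1 + (ENNReal.ofReal t₀)⁻¹ * mu01 (Ω σ))) * Kmax :=
          (Finset.sum_mul _ _ _).symm
      _ = (2 : ℝ≥0∞) ^ (i + 1) * Kmax := by
          rw [Finset.sum_add_distrib, ← Finset.mul_sum, hcount, hmeasum, hcoef,
            mul_one, pow_succ]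
          ring
  -- conclusion
  set N : ℝ≥0∞ := ∑ l, eLpNorm (y l) 1 mu01 with hN
  have hNtop : N ≠ ∞ := by
    rw [hN]
    exact (ENNReal.sum_lt_top.mpr fun l _ =>
      (memLp_one_iff_integrable.mpr (hy l)).eLpNorm_lt_top).ne
  have hT : ∑ l, (eLpNorm (y l) 1 mu01).toReal = N.toReal :=
    (ENNReal.toReal_sum fun l _ => (ENNReal.sum_lt_top.mp hNtop.lt_top l (Finset.mem_univ l)).ne).symm
  have hT0 : 0 ≤ N.toReal := ENNReal.toReal_nonneg
  show ENNReal.ofReal (d * t₀ * ∑ l, (eLpNorm (y l) 1 mu01).toReal) ≤ Kmax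
  calc ENNReal.ofReal (d * t₀ * ∑ l, (eLpNorm (y l) 1 mu01).toReal)
      ≤ ENNReal.ofReal ((2 : ℝ)⁻¹ * t₀ * N.toReal) := by
        rw [hT]
        refine ENNReal.ofReal_le_ofReal ?_
        have : d * t₀ ≤ (2 : ℝ)⁻¹ * t₀ :=
          mul_le_mul_of_nonneg_right (by linarith) ht₀.le
        exact mul_le_mul_of_nonneg_right this hT0
    _ = ((2 : ℝ≥0∞) ^ (i + 1))⁻¹ * N := by
        rw [ENNReal.ofReal_mul (by positivity), ENNReal.ofReal_toReal hNtop]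
        congr 1
        have h1 : (2 : ℝ)⁻¹ * t₀ = ((2 : ℝ) ^ (i + 1))⁻¹ := by
          rw [ht₀def, pow_succ]
          field_simp
        rw [h1, ENNReal.ofReal_inv_of_pos (by positivity),
          ENNReal.ofReal_pow (by norm_num)]
        norm_num
    _ ≤ ((2 : ℝ≥0∞) ^ (i + 1))⁻¹ * ((2 : ℝ≥0∞) ^ (i + 1) * Kmax) :=
        mul_le_mul_right main _
    _ = Kmax := by
        rw [← mul_assoc, ENNReal.inv_mul_cancel
          (pow_ne_zero _ (by norm_num)) (ENNReal.pow_ne_top (by norm_num)), one_mul]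
end

section
/- Let 1 < p < 2 and q = p/(p-1). There exists a constant c > 0 such that for every n ∈ ℕ and every finite family f_1, …, f_n ∈ Exp L^q of measurable functions on [0,1], one has sup_{t>0} t · (#{k : ‖f_k‖_{L^1[0,1]} > t})^{1/p} ≤ c · max_{ε ∈ {-1,1}^n} ‖Σ_{k=1}^n ε_k f_k‖_{Exp L^q}. (That is, the inclusion Exp L^q ⊂ L^1 is (ℓ^{p,∞},1)-absolutely summing.) -/
open MeasureTheory
open scoped ENNReal

section Helpers

lemma exp_rpow_midpoint {q a b : ℝ} (hq : 1 ≤ q) (ha : 0 ≤ a) (hb : 0 ≤ b) :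
    Real.exp (((a + b) / 2) ^ q) - 1 ≤
      ((Real.exp (a ^ q) - 1) + (Real.exp (b ^ q) - 1)) / 2 := by
  have h1 : ((a + b) / 2) ^ q ≤ (a ^ q + b ^ q) / 2 := by
    have hc := (convexOn_rpow hq).2 (Set.mem_Ici.mpr ha) (Set.mem_Ici.mpr hb)
      (by norm_num : (0:ℝ) ≤ 1/2) (by norm_num : (0:ℝ) ≤ 1/2) (by norm_num)
    simp only [smul_eq_mul] at hc
    calc ((a + b) / 2) ^ q = ((1:ℝ)/2 * a + 1/2 * b) ^ q := by
          rw [show (a + b) / 2 = (1:ℝ)/2 * a + 1/2 * b by ring]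
      _ ≤ 1/2 * a ^ q + 1/2 * b ^ q := hc
      _ = (a ^ q + b ^ q) / 2 := by ring
  have h2 : Real.exp ((a ^ q + b ^ q) / 2) ≤ (Real.exp (a ^ q) + Real.exp (b ^ q)) / 2 := by
    have hc := convexOn_exp.2 (Set.mem_univ (a ^ q)) (Set.mem_univ (b ^ q))
      (by norm_num : (0:ℝ) ≤ 1/2) (by norm_num : (0:ℝ) ≤ 1/2) (by norm_num)
    simp only [smul_eq_mul] at hc
    calc Real.exp ((a ^ q + b ^ q) / 2) = Real.exp (1/2 * a ^ q + 1/2 * b ^ q) := by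
          rw [show (a ^ q + b ^ q) / 2 = 1/2 * a ^ q + 1/2 * b ^ q by ring]
      _ ≤ 1/2 * Real.exp (a ^ q) + 1/2 * Real.exp (b ^ q) := hc
      _ = (Real.exp (a ^ q) + Real.exp (b ^ q)) / 2 := by ring
  have := (Real.exp_le_exp.mpr h1).trans h2
  linarith

lemma linear_le_exp_aux {q β lam u : ℝ} (hq : 1 ≤ q) (hβ : 1 ≤ β) (hlam : 0 < lam)
    (hu : 0 ≤ u) :
    u ≤ lam * β + lam * (Real.exp (-β ^ q) * Real.exp ((u / lam) ^ q)) := by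
  rcases le_or_gt u (lam * β) with h | h
  · have h2 : 0 ≤ lam * (Real.exp (-β ^ q) * Real.exp ((u / lam) ^ q)) := by positivity
    linarith
  · set x := u / lam with hx_def
    have hxβ : β < x := by
      rw [hx_def, lt_div_iff₀ hlam]; linarith
    have hβ0 : (0:ℝ) < β := by linarith
    have hx0 : (0:ℝ) < x := by linarith
    have eqx : x ^ q = x ^ (q - 1) * x := by
      have h' := Real.rpow_add hx0 (q - 1) 1
      rw [Real.rpow_one, sub_add_cancel] at h'
      exact h'
    have eqβ : β ^ q = β ^ (q - 1) * β := by
      have h' := Real.rpow_add hβ0 (q - 1) 1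
      rw [Real.rpow_one, sub_add_cancel] at h'
      exact h'
    have hXB : β ^ (q - 1) ≤ x ^ (q - 1) :=
      Real.rpow_le_rpow hβ0.le hxβ.le (by linarith)
    have hB1 : (1:ℝ) ≤ β ^ (q - 1) := by
      have := Real.rpow_le_rpow_of_exponent_le hβ (by linarith : (0:ℝ) ≤ q - 1)
      rwa [Real.rpow_zero] at this
    have h1 : x - β ≤ x ^ q - β ^ q := by
      rw [eqx, eqβ]
      nlinarith [mul_nonneg (sub_nonneg.mpr hXB) hx0.le,
        mul_nonneg (sub_nonneg.mpr hB1) (sub_nonneg.mpr hxβ.le)]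
    have h4 : x - β ≤ Real.exp (-β ^ q) * Real.exp (x ^ q) := by
      rw [← Real.exp_add]
      have := Real.add_one_le_exp (-β ^ q + x ^ q)
      linarith
    have hux : lam * x = u := by
      rw [hx_def]; field_simp
    nlinarith [mul_le_mul_of_nonneg_left h4 hlam.le]

lemma exp_integral_le_two {g : ℝ → ℝ} {q lam : ℝ}
    (h : ∫⁻ x, ENNReal.ofReal (Real.exp ((|g x| / lam) ^ q) - 1) ∂mu01 ≤ 1) :
    ∫⁻ x, ENNReal.ofReal (Real.exp ((|g x| / lam) ^ q)) ∂mu01 ≤ 2 := by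
  have hpt : ∀ x, ENNReal.ofReal (Real.exp ((|g x| / lam) ^ q)) ≤
      ENNReal.ofReal (Real.exp ((|g x| / lam) ^ q) - 1) + 1 := by
    intro x
    calc ENNReal.ofReal (Real.exp ((|g x| / lam) ^ q))
        = ENNReal.ofReal ((Real.exp ((|g x| / lam) ^ q) - 1) + 1) := by ring_nf
      _ ≤ ENNReal.ofReal (Real.exp ((|g x| / lam) ^ q) - 1) + ENNReal.ofReal 1 :=
          ENNReal.ofReal_add_le
      _ = ENNReal.ofReal (Real.exp ((|g x| / lam) ^ q) - 1) + 1 := by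
          rw [ENNReal.ofReal_one]
  calc ∫⁻ x, ENNReal.ofReal (Real.exp ((|g x| / lam) ^ q)) ∂mu01
      ≤ ∫⁻ x, (ENNReal.ofReal (Real.exp ((|g x| / lam) ^ q) - 1) + 1) ∂mu01 :=
        lintegral_mono hpt
    _ = (∫⁻ x, ENNReal.ofReal (Real.exp ((|g x| / lam) ^ q) - 1) ∂mu01) + ∫⁻ _, 1 ∂mu01 :=
        lintegral_add_right _ measurable_const
    _ ≤ 1 + 1 := by
        refine add_le_add h ?_
        rw [lintegral_one, mu01_univ]
    _ = 2 := by norm_num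

end Helpers

section Part2
open Finset

lemma hB_admissible {q lam : ℝ} (hq : 1 ≤ q) (hlam : 0 < lam) {n : ℕ} (f : Fin n → ℝ → ℝ)
    (hfm : ∀ k, Measurable (f k)) (A B : Finset (Fin n))
    (hadm : ∀ ε : Fin n → ({-1, 1} : Set ℝ),
      ∫⁻ x, ENNReal.ofReal
        (Real.exp ((|∑ k, (ε k : ℝ) * f k x| / lam) ^ q) - 1) ∂mu01 ≤ 1) :
    ∫⁻ x, ENNReal.ofReal
        (Real.exp ((|∑ k ∈ A, (if k ∈ B then (1:ℝ) else -1) * f k x| / lam) ^ q) - 1)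
        ∂mu01 ≤ 1 := by
  classical
  have mem1 : (1:ℝ) ∈ ({-1, 1} : Set ℝ) := by simp
  have memm1 : (-1:ℝ) ∈ ({-1, 1} : Set ℝ) := by simp
  set ε₁ : Fin n → ({-1, 1} : Set ℝ) := fun k =>
    if k ∈ A then (if k ∈ B then ⟨1, mem1⟩ else ⟨-1, memm1⟩) else ⟨1, mem1⟩ with hε₁
  set ε₂ : Fin n → ({-1, 1} : Set ℝ) := fun k =>
    if k ∈ A then (if k ∈ B then ⟨1, mem1⟩ else ⟨-1, memm1⟩) else ⟨-1, memm1⟩ with hε₂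
  set g₁ : ℝ → ℝ := fun x => ∑ k, (ε₁ k : ℝ) * f k x with hg₁
  set g₂ : ℝ → ℝ := fun x => ∑ k, (ε₂ k : ℝ) * f k x with hg₂
  have key : ∀ x, ∑ k ∈ A, (if k ∈ B then (1:ℝ) else -1) * f k x = (g₁ x + g₂ x) / 2 := by
    intro x
    have e1 : g₁ x + g₂ x = ∑ k : Fin n, ((ε₁ k : ℝ) + (ε₂ k : ℝ)) * f k x := by
      rw [hg₁, hg₂, ← Finset.sum_add_distrib]
      exact Finset.sum_congr rfl fun k _ => by ring
    have e2 : ∀ k : Fin n, ((ε₁ k : ℝ) + (ε₂ k : ℝ)) * f k x =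
        if k ∈ A then 2 * ((if k ∈ B then (1:ℝ) else -1) * f k x) else 0 := by
      intro k
      by_cases hA : k ∈ A <;> by_cases hB : k ∈ B <;>
        simp [hε₁, hε₂, hA, hB] <;> ring_nf <;> tauto
    rw [e1, Finset.sum_congr rfl fun k _ => e2 k, Finset.sum_ite_mem,
      Finset.univ_inter, ← Finset.mul_sum]
    ring
  have hg₁m : Measurable g₁ := by
    rw [hg₁]; exact Finset.measurable_sum _ fun k _ => (hfm k).const_mul _
  have h0 : ∀ y : ℝ, (0:ℝ) ≤ Real.exp ((|y| / lam) ^ q) - 1 := by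
    intro y
    have h1 : (0:ℝ) ≤ (|y| / lam) ^ q := Real.rpow_nonneg (by positivity) _
    nlinarith [Real.add_one_le_exp ((|y| / lam) ^ q)]
  set Φ₁ : ℝ → ℝ≥0∞ := fun x => ENNReal.ofReal (Real.exp ((|g₁ x| / lam) ^ q) - 1) with hΦ₁
  set Φ₂ : ℝ → ℝ≥0∞ := fun x => ENNReal.ofReal (Real.exp ((|g₂ x| / lam) ^ q) - 1) with hΦ₂
  have step1 : ∫⁻ x, ENNReal.ofReal
      (Real.exp ((|∑ k ∈ A, (if k ∈ B then (1:ℝ) else -1) * f k x| / lam) ^ q) - 1) ∂mu01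
      ≤ ∫⁻ x, ENNReal.ofReal 2⁻¹ * (Φ₁ x + Φ₂ x) ∂mu01 := by
    refine lintegral_mono fun x => ?_
    rw [key x]
    set a := |g₁ x| / lam with ha_def
    set b := |g₂ x| / lam with hb_def
    have ha : 0 ≤ a := by rw [ha_def]; positivity
    have hb : 0 ≤ b := by rw [hb_def]; positivity
    have habs : |(g₁ x + g₂ x) / 2| / lam ≤ (a + b) / 2 := by
      rw [ha_def, hb_def]
      calc |(g₁ x + g₂ x) / 2| / lam = (|g₁ x + g₂ x| / 2) / lam := by
            rw [abs_div, abs_two]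
        _ ≤ ((|g₁ x| + |g₂ x|) / 2) / lam := by
            gcongr
            exact abs_add_le _ _
        _ = (|g₁ x| / lam + |g₂ x| / lam) / 2 := by ring
    have hmono : Real.exp ((|(g₁ x + g₂ x) / 2| / lam) ^ q) - 1 ≤
        Real.exp (((a + b) / 2) ^ q) - 1 := by
      have := Real.rpow_le_rpow (by positivity) habs (by linarith : (0:ℝ) ≤ q)
      exact sub_le_sub_right (Real.exp_le_exp.mpr this) 1
    have hmid := exp_rpow_midpoint hq ha hb
    calc ENNReal.ofReal (Real.exp ((|(g₁ x + g₂ x) / 2| / lam) ^ q) - 1)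
        ≤ ENNReal.ofReal (2⁻¹ * ((Real.exp (a ^ q) - 1) + (Real.exp (b ^ q) - 1))) := by
          apply ENNReal.ofReal_le_ofReal; rw [inv_eq_one_div]; linarith
      _ = ENNReal.ofReal 2⁻¹ * (Φ₁ x + Φ₂ x) := by
          rw [ENNReal.ofReal_mul (by norm_num), ENNReal.ofReal_add (h0 _) (h0 _)]
  have step2 : ∫⁻ x, ENNReal.ofReal 2⁻¹ * (Φ₁ x + Φ₂ x) ∂mu01 =
      ENNReal.ofReal 2⁻¹ * ((∫⁻ x, Φ₁ x ∂mu01) + ∫⁻ x, Φ₂ x ∂mu01) := by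
    rw [lintegral_const_mul' _ _ ENNReal.ofReal_ne_top,
      lintegral_add_left (by rw [hΦ₁]; fun_prop)]
  have hI₁ : ∫⁻ x, Φ₁ x ∂mu01 ≤ 1 := hadm ε₁
  have hI₂ : ∫⁻ x, Φ₂ x ∂mu01 ≤ 1 := hadm ε₂
  have step3 : ENNReal.ofReal 2⁻¹ * ((∫⁻ x, Φ₁ x ∂mu01) + ∫⁻ x, Φ₂ x ∂mu01) ≤ 1 := by
    calc ENNReal.ofReal 2⁻¹ * ((∫⁻ x, Φ₁ x ∂mu01) + ∫⁻ x, Φ₂ x ∂mu01)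
        ≤ ENNReal.ofReal 2⁻¹ * (1 + 1) := by gcongr
      _ = 1 := by
          have h2 : ENNReal.ofReal 2 = 2 := by norm_num
          rw [ENNReal.ofReal_inv_of_pos (by norm_num), h2, one_add_one_eq_two,
            ENNReal.inv_mul_cancel two_ne_zero ENNReal.ofNat_ne_top]
  exact (step1.trans (le_of_eq step2)).trans step3

end Part2

section Part3
open Finset

lemma key_estimate {n : ℕ} {q lam t : ℝ} (hq : 2 ≤ q) (hlam : 0 < lam) (ht : 0 < t)
    (f : Fin n → ℝ → ℝ) (hfm : ∀ k, Measurable (f k))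
    (hadm : ∀ ε : Fin n → ({-1, 1} : Set ℝ),
      ∫⁻ x, ENNReal.ofReal
        (Real.exp ((|∑ k, (ε k : ℝ) * f k x| / lam) ^ q) - 1) ∂mu01 ≤ 1)
    (A : Finset (Fin n)) (hA : ∀ k ∈ A, ENNReal.ofReal t ≤ eLpNorm (f k) 1 mu01) :
    t * (A.card : ℝ) ^ (1 - 1/q) ≤ 6 * lam := by
  classical
  have hq0 : (0:ℝ) < q := by linarith
  rcases Nat.eq_zero_or_pos A.card with hm0 | hmpos
  · rw [hm0]
    push_cast
    have h1q : 1/q < 1 := by rw [div_lt_one hq0]; linarith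
    rw [Real.zero_rpow (sub_pos.mpr h1q).ne']
    nlinarith
  set m := A.card with hm_def
  have hm1 : (1:ℝ) ≤ (m:ℝ) := by exact_mod_cast hmpos
  have hm0R : (0:ℝ) < (m:ℝ) := by linarith
  have h2m1 : (1:ℝ) ≤ 2 ^ m := one_le_pow₀ (by norm_num)
  have he1 : (1:ℝ) ≤ Real.exp 1 := by nlinarith [Real.add_one_le_exp (1:ℝ)]
  have hLpos : (0:ℝ) < 2 * Real.exp 1 * 2 ^ m := by positivity
  set L : ℝ := Real.log (2 * Real.exp 1 * 2 ^ m) with hL_def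
  have hL1 : (1:ℝ) ≤ L := by
    rw [hL_def]
    calc (1:ℝ) = Real.log (Real.exp 1) := (Real.log_exp 1).symm
      _ ≤ _ := Real.log_le_log (Real.exp_pos 1) (by nlinarith)
  have hL0 : (0:ℝ) ≤ L := by linarith
  set β : ℝ := L ^ (1/q) with hβ_def
  have hβ1 : (1:ℝ) ≤ β := by
    rw [hβ_def]
    have h : L ^ (0:ℝ) ≤ L ^ (1/q) :=
      Real.rpow_le_rpow_of_exponent_le hL1 (by positivity)
    rwa [Real.rpow_zero] at h
  have hβq : β ^ q = L := by
    rw [hβ_def, ← Real.rpow_mul hL0]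
    rw [one_div, inv_mul_cancel₀ (by linarith : q ≠ 0), Real.rpow_one]
  have hexpβ : Real.exp (-β ^ q) = 1 / (2 * Real.exp 1 * 2 ^ m) := by
    rw [hβq, hL_def, Real.exp_neg, Real.exp_log hLpos, one_div]
  -- the Luxemburg-type exponential integrals over all sign patterns on A
  have hBint : ∀ B ∈ A.powerset,
      ∫⁻ x, ENNReal.ofReal
        (Real.exp ((|∑ k ∈ A, (if k ∈ B then (1:ℝ) else -1) * f k x| / lam) ^ q))
        ∂mu01 ≤ 2 := by
    intro B _
    exact exp_integral_le_two
      (hB_admissible (by linarith) hlam f hfm A B hadm)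
  -- pointwise estimate
  have hpt : ∀ x, ENNReal.ofReal (∑ k ∈ A, |f k x|) ≤
      ENNReal.ofReal (lam * β) + ENNReal.ofReal (lam * Real.exp (-β ^ q)) *
        ∑ B ∈ A.powerset, ENNReal.ofReal
          (Real.exp ((|∑ k ∈ A, (if k ∈ B then (1:ℝ) else -1) * f k x| / lam) ^ q)) := by
    intro x
    set B₀ : Finset (Fin n) := A.filter (fun k => 0 ≤ f k x) with hB₀
    have hB₀mem : B₀ ∈ A.powerset := Finset.mem_powerset.mpr (Finset.filter_subset _ _)
    set u : ℝ := ∑ k ∈ A, |f k x| with hu_def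
    have hu0 : 0 ≤ u := Finset.sum_nonneg fun k _ => abs_nonneg _
    have hux : u = ∑ k ∈ A, (if k ∈ B₀ then (1:ℝ) else -1) * f k x := by
      rw [hu_def]
      refine Finset.sum_congr rfl fun k hk => ?_
      by_cases h : 0 ≤ f k x
      · have hmem : k ∈ B₀ := by rw [hB₀]; exact Finset.mem_filter.mpr ⟨hk, h⟩
        rw [if_pos hmem, one_mul, abs_of_nonneg h]
      · have hmem : k ∉ B₀ := by
          rw [hB₀]; intro hmem; exact h (Finset.mem_filter.mp hmem).2
        rw [if_neg hmem, neg_one_mul, abs_of_neg (lt_of_not_ge h)]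
    have habs : |∑ k ∈ A, (if k ∈ B₀ then (1:ℝ) else -1) * f k x| = u := by
      rw [← hux]; exact abs_of_nonneg hu0
    have hkey : u ≤ lam * β + lam * (Real.exp (-β ^ q) * Real.exp ((u / lam) ^ q)) :=
      linear_le_exp_aux (by linarith) hβ1 hlam hu0
    calc ENNReal.ofReal u
        ≤ ENNReal.ofReal (lam * β + lam * (Real.exp (-β ^ q) * Real.exp ((u / lam) ^ q))) :=
          ENNReal.ofReal_le_ofReal hkey
      _ ≤ ENNReal.ofReal (lam * β) +
          ENNReal.ofReal (lam * (Real.exp (-β ^ q) * Real.exp ((u / lam) ^ q))) :=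
          ENNReal.ofReal_add_le
      _ = ENNReal.ofReal (lam * β) + ENNReal.ofReal (lam * Real.exp (-β ^ q)) *
          ENNReal.ofReal (Real.exp ((u / lam) ^ q)) := by
          rw [← ENNReal.ofReal_mul (by positivity), mul_assoc]
      _ ≤ ENNReal.ofReal (lam * β) + ENNReal.ofReal (lam * Real.exp (-β ^ q)) *
          ∑ B ∈ A.powerset, ENNReal.ofReal
            (Real.exp ((|∑ k ∈ A, (if k ∈ B then (1:ℝ) else -1) * f k x| / lam) ^ q)) := by
          gcongr
          have : ENNReal.ofReal (Real.exp ((u / lam) ^ q)) =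
              ENNReal.ofReal
                (Real.exp ((|∑ k ∈ A, (if k ∈ B₀ then (1:ℝ) else -1) * f k x| / lam) ^ q)) := by
            rw [habs]
          rw [this]
          exact Finset.single_le_sum (f := fun B => ENNReal.ofReal
            (Real.exp ((|∑ k ∈ A, (if k ∈ B then (1:ℝ) else -1) * f k x| / lam) ^ q)))
            (fun B _ => zero_le) hB₀mem
  -- integrate
  have hsum2 : ∑ k ∈ A, eLpNorm (f k) 1 mu01 =
      ∫⁻ x, ENNReal.ofReal (∑ k ∈ A, |f k x|) ∂mu01 := by
    have heL : ∀ k : Fin n, eLpNorm (f k) 1 mu01 = ∫⁻ x, ENNReal.ofReal |f k x| ∂mu01 := by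
      intro k
      rw [eLpNorm_one_eq_lintegral_enorm]
      exact lintegral_congr fun x => Real.enorm_eq_ofReal_abs _
    rw [Finset.sum_congr rfl fun k _ => heL k,
      ← lintegral_finset_sum _ (fun k _ => by fun_prop)]
    exact lintegral_congr fun x => (ENNReal.ofReal_sum_of_nonneg fun k _ => abs_nonneg _).symm
  have hmeasB : ∀ B ∈ A.powerset, Measurable fun x => ENNReal.ofReal
      (Real.exp ((|∑ k ∈ A, (if k ∈ B then (1:ℝ) else -1) * f k x| / lam) ^ q)) := by
    intro B _
    have : Measurable fun x => ∑ k ∈ A, (if k ∈ B then (1:ℝ) else -1) * f k x :=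
      Finset.measurable_sum _ fun k _ => (hfm k).const_mul _
    fun_prop
  have hmain : (m : ℝ≥0∞) * ENNReal.ofReal t ≤
      ENNReal.ofReal (lam * β) + ENNReal.ofReal (lam * Real.exp (-β ^ q)) * (2 ^ m * 2) := by
    calc (m : ℝ≥0∞) * ENNReal.ofReal t = ∑ _k ∈ A, ENNReal.ofReal t := by
          rw [Finset.sum_const, nsmul_eq_mul, hm_def]
      _ ≤ ∑ k ∈ A, eLpNorm (f k) 1 mu01 := Finset.sum_le_sum hA
      _ = ∫⁻ x, ENNReal.ofReal (∑ k ∈ A, |f k x|) ∂mu01 := hsum2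
      _ ≤ ∫⁻ x, (ENNReal.ofReal (lam * β) + ENNReal.ofReal (lam * Real.exp (-β ^ q)) *
            ∑ B ∈ A.powerset, ENNReal.ofReal
              (Real.exp ((|∑ k ∈ A, (if k ∈ B then (1:ℝ) else -1) * f k x| / lam) ^ q)))
            ∂mu01 := lintegral_mono hpt
      _ = ENNReal.ofReal (lam * β) * mu01 Set.univ + ENNReal.ofReal (lam * Real.exp (-β ^ q)) *
            ∑ B ∈ A.powerset, ∫⁻ x, ENNReal.ofReal
              (Real.exp ((|∑ k ∈ A, (if k ∈ B then (1:ℝ) else -1) * f k x| / lam) ^ q))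
            ∂mu01 := by
          rw [lintegral_add_left measurable_const, lintegral_const,
            lintegral_const_mul' _ _ ENNReal.ofReal_ne_top,
            lintegral_finset_sum _ hmeasB]
      _ ≤ ENNReal.ofReal (lam * β) * 1 + ENNReal.ofReal (lam * Real.exp (-β ^ q)) *
            ∑ _B ∈ A.powerset, (2:ℝ≥0∞) := by
          rw [mu01_univ]
          gcongr with B hB
          exact hBint B hB
      _ = ENNReal.ofReal (lam * β) + ENNReal.ofReal (lam * Real.exp (-β ^ q)) * (2 ^ m * 2) := by
          rw [mul_one, Finset.sum_const, Finset.card_powerset, nsmul_eq_mul, hm_def]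
          push_cast
          ring
  -- convert to a real inequality
  have hreal : t * (m:ℝ) ≤ 2 * lam * β := by
    have h1 : (2:ℝ≥0∞) ^ m * 2 = ENNReal.ofReal ((2:ℝ) ^ m * 2) := by
      rw [ENNReal.ofReal_mul (by positivity), ENNReal.ofReal_pow (by norm_num)]
      norm_num
    have h2 : ENNReal.ofReal (lam * Real.exp (-β ^ q)) * (2 ^ m * 2) =
        ENNReal.ofReal (lam / Real.exp 1) := by
      rw [h1, ← ENNReal.ofReal_mul (by positivity), hexpβ]
      congr 1
      field_simp
    have h3 : (m : ℝ≥0∞) * ENNReal.ofReal t = ENNReal.ofReal (t * m) := by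
      rw [ENNReal.ofReal_mul ht.le, ENNReal.ofReal_natCast, mul_comm]
    rw [h3, h2] at hmain
    have h4 : ENNReal.ofReal (t * m) ≤ ENNReal.ofReal (2 * lam * β) := by
      refine hmain.trans ?_
      rw [← ENNReal.ofReal_add (by positivity) (by positivity)]
      apply ENNReal.ofReal_le_ofReal
      have : lam / Real.exp 1 ≤ lam := div_le_self hlam.le he1
      nlinarith
    exact (ENNReal.ofReal_le_ofReal_iff (by positivity)).mp h4
  -- final computation
  have hL3m : L ≤ 3 * m := by
    have hlog2 : Real.log 2 ≤ 1 := by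
      nlinarith [Real.log_le_sub_one_of_pos (by norm_num : (0:ℝ) < 2)]
    have : L = Real.log 2 + 1 + m * Real.log 2 := by
      rw [hL_def, Real.log_mul (by positivity) (by positivity),
        Real.log_mul (by norm_num) (Real.exp_ne_zero 1), Real.log_exp, Real.log_pow]
    rw [this]
    have hlog2' : 0 ≤ Real.log 2 := Real.log_nonneg (by norm_num)
    nlinarith
  have hmq : (0:ℝ) < (m:ℝ) ^ (1/q) := Real.rpow_pos_of_pos hm0R _
  have hβ3 : β ≤ 3 * (m:ℝ) ^ (1/q) := by
    rw [hβ_def]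
    calc L ^ (1/q) ≤ (3 * m) ^ (1/q) :=
          Real.rpow_le_rpow hL0 hL3m (by positivity)
      _ = 3 ^ (1/q) * (m:ℝ) ^ (1/q) := Real.mul_rpow (by norm_num) hm0R.le
      _ ≤ 3 * (m:ℝ) ^ (1/q) := by
          have h31 : (3:ℝ) ^ (1/q) ≤ 3 ^ (1:ℝ) :=
            Real.rpow_le_rpow_of_exponent_le (by norm_num)
              (by rw [div_le_one hq0]; linarith)
          rw [Real.rpow_one] at h31
          nlinarith
  rw [← mul_le_mul_iff_of_pos_right hmq]
  calc t * (m:ℝ) ^ (1 - 1/q) * (m:ℝ) ^ (1/q) = t * (m:ℝ) := by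
        rw [mul_assoc, ← Real.rpow_add hm0R]
        norm_num
    _ ≤ 2 * lam * β := hreal
    _ ≤ 6 * lam * (m:ℝ) ^ (1/q) := by nlinarith

end Part3

/-- Corollary: for `1 < p < 2` and `q = p/(p-1)`, the inclusion
`Exp L^q ⊂ L^1` is `(ℓ^{p,∞},1)`-absolutely summing. -/
theorem expL_subset_L1_weak_lp_summing (p : ℝ) (hp : 1 < p) (hp2 : p < 2) :
    ∃ c : ℝ, 0 < c ∧ ∀ (n : ℕ) (f : Fin n → ℝ → ℝ),
      (∀ k, Measurable (f k)) → (∀ k, expLNorm (p / (p - 1)) (f k) ≠ ⊤) →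
      ENNReal.ofReal (weakLq p fun k => (eLpNorm (f k) 1 mu01).toReal) ≤
        ENNReal.ofReal c *
          ⨆ ε : Fin n → ({-1, 1} : Set ℝ),
            expLNorm (p / (p - 1)) (fun t => ∑ k, (ε k : ℝ) * f k t) := by
  classical
  have hp1 : (0:ℝ) < p - 1 := by linarith
  set q : ℝ := p / (p - 1) with hq_def
  have hq2 : (2:ℝ) ≤ q := by
    rw [hq_def, le_div_iff₀ hp1]; linarith
  have hpq : 1 - 1/q = 1/p := by
    rw [hq_def]
    field_simp
    ring
  refine ⟨6, by norm_num, ?_⟩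
  intro n f hfm _hfin
  set S : ℝ≥0∞ := ⨆ ε : Fin n → ({-1, 1} : Set ℝ),
    expLNorm q (fun t => ∑ k, (ε k : ℝ) * f k t) with hS_def
  by_cases hS : S = ⊤
  · rw [hS, ENNReal.mul_top (by simp : ENNReal.ofReal 6 ≠ 0)]
    exact le_top
  refine ENNReal.le_of_forall_pos_le_add fun η hη _ => ?_
  have hηpos : (0:ℝ) < (η:ℝ) := hη
  set lam : ℝ := S.toReal + (η:ℝ)/6 with hlam_def
  have hlam : 0 < lam := by
    rw [hlam_def]
    have := ENNReal.toReal_nonneg (a := S)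
    positivity
  have hadm : ∀ ε : Fin n → ({-1, 1} : Set ℝ),
      ∫⁻ x, ENNReal.ofReal
        (Real.exp ((|∑ k, (ε k : ℝ) * f k x| / lam) ^ q) - 1) ∂mu01 ≤ 1 := by
    intro ε
    have h1 : expLNorm q (fun t => ∑ k, (ε k : ℝ) * f k t) < ENNReal.ofReal lam := by
      refine lt_of_le_of_lt (le_iSup (fun ε : Fin n → ({-1, 1} : Set ℝ) =>
        expLNorm q (fun t => ∑ k, (ε k : ℝ) * f k t)) ε) ?_
      rw [← hS_def]
      calc S = ENNReal.ofReal S.toReal := (ENNReal.ofReal_toReal hS).symm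
        _ < ENNReal.ofReal lam := by
            rw [ENNReal.ofReal_lt_ofReal_iff_of_nonneg ENNReal.toReal_nonneg, hlam_def]
            linarith
    rw [expLNorm] at h1
    obtain ⟨lam', h2⟩ := iInf_lt_iff.mp h1
    obtain ⟨hcond, h3⟩ := iInf_lt_iff.mp h2
    have hle : lam' ≤ lam := by
      by_contra hcon
      push_neg at hcon
      exact absurd h3 (not_lt.mpr (ENNReal.ofReal_le_ofReal hcon.le))
    refine le_trans (lintegral_mono fun x => ?_) hcond.2
    apply ENNReal.ofReal_le_ofReal
    have hd : |∑ k, (ε k : ℝ) * f k x| / lam ≤ |∑ k, (ε k : ℝ) * f k x| / lam' :=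
      div_le_div_of_nonneg_left (abs_nonneg _) hcond.1 hle
    exact sub_le_sub_right
      (Real.exp_le_exp.mpr (Real.rpow_le_rpow (by positivity) hd (by linarith))) 1
  -- bound each term of the weak-ℓp supremum
  have hbound : ∀ t' : Set.Ioi (0:ℝ),
      t'.1 * (Nat.card {k : Fin n //
        t'.1 < |(fun k => (eLpNorm (f k) 1 mu01).toReal) k|} : ℝ) ^ (1/p) ≤ 6 * lam := by
    rintro ⟨t, ht⟩
    simp only [Set.mem_Ioi] at ht
    set A : Finset (Fin n) :=
      Finset.univ.filter (fun k => t < |(eLpNorm (f k) 1 mu01).toReal|) with hA_def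
    have hcard : (Nat.card {k : Fin n //
        t < |(eLpNorm (f k) 1 mu01).toReal|} : ℝ) = (A.card : ℝ) := by
      rw [Nat.card_eq_fintype_card, hA_def]
      norm_cast
      convert Fintype.card_subtype _ using 2
    have hAk : ∀ k ∈ A, ENNReal.ofReal t ≤ eLpNorm (f k) 1 mu01 := by
      intro k hk
      rcases eq_or_ne (eLpNorm (f k) 1 mu01) ⊤ with h | h
      · rw [h]; exact le_top
      · have h2 := (Finset.mem_filter.mp hk).2
        rw [abs_of_nonneg ENNReal.toReal_nonneg] at h2
        calc ENNReal.ofReal t ≤ ENNReal.ofReal (eLpNorm (f k) 1 mu01).toReal :=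
              ENNReal.ofReal_le_ofReal h2.le
          _ = _ := ENNReal.ofReal_toReal h
    show t * _ ≤ 6 * lam
    rw [hcard, ← hpq]
    exact key_estimate hq2 hlam ht f hfm hadm A hAk
  have hweak : weakLq p (fun k => (eLpNorm (f k) 1 mu01).toReal) ≤ 6 * lam := by
    rw [weakLq]
    exact Real.iSup_le hbound (by positivity)
  calc ENNReal.ofReal (weakLq p fun k => (eLpNorm (f k) 1 mu01).toReal)
      ≤ ENNReal.ofReal (6 * lam) := ENNReal.ofReal_le_ofReal hweak
    _ = ENNReal.ofReal 6 * ENNReal.ofReal lam := ENNReal.ofReal_mul (by norm_num)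
    _ = ENNReal.ofReal 6 * (S + ENNReal.ofReal ((η:ℝ)/6)) := by
        rw [hlam_def, ENNReal.ofReal_add ENNReal.toReal_nonneg (by positivity),
          ENNReal.ofReal_toReal hS]
    _ = ENNReal.ofReal 6 * S + ENNReal.ofReal 6 * ENNReal.ofReal ((η:ℝ)/6) := by
        rw [mul_add]
    _ ≤ ENNReal.ofReal 6 * S + η := by
        gcongr
        rw [← ENNReal.ofReal_mul (by norm_num)]
        rw [show (6:ℝ) * ((η:ℝ)/6) = (η:ℝ) by ring]
        rw [ENNReal.ofReal_coe_nnreal]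
end

section
/- Let 1 < p < 2. There exists a constant c > 0 such that for every n ∈ ℕ and every finite family f_1, …, f_n ∈ X_p of measurable functions on [0,1], one has sup_{t>0} t · (#{k : ‖f_k‖_{L^1[0,1]} > t})^{1/p} ≤ c · max_{ε ∈ {-1,1}^n} ‖Σ_{k=1}^n ε_k f_k‖_{X_p}. (That is, the inclusion X_p ⊂ L^1 is (ℓ^{p,∞},1)-absolutely summing.) -/
open MeasureTheory
open scoped ENNReal

private lemma wp_nonneg {p t : ℝ} (h0 : 0 ≤ t) (h1 : t ≤ 1) : 0 ≤ Wp p t := by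
  unfold Wp
  split_ifs with h
  · exact le_refl 0
  · have ht : 0 < t := lt_of_le_of_ne h0 (Ne.symm h)
    have he : (1:ℝ) ≤ Real.exp 1 / t := by
      rw [le_div_iff₀ ht, one_mul]
      have := Real.add_one_le_exp 1
      linarith
    exact Real.rpow_nonneg (Real.log_nonneg he) _

private lemma wp_mono {p t1 t2 : ℝ} (hp : 1 < p) (h0 : 0 ≤ t1) (h12 : t1 ≤ t2) (h2 : t2 ≤ 1) :
    Wp p t1 ≤ Wp p t2 := by
  rcases eq_or_lt_of_le h0 with h | h1pos
  · have : Wp p t1 = 0 := by unfold Wp; rw [if_pos h.symm]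
    rw [this]
    exact wp_nonneg (le_trans h0 h12) h2
  · have h2pos : 0 < t2 := lt_of_lt_of_le h1pos h12
    unfold Wp
    rw [if_neg (ne_of_gt h1pos), if_neg (ne_of_gt h2pos)]
    have hexp2 : (2:ℝ) ≤ Real.exp 1 := by have := Real.add_one_le_exp 1; linarith
    have hl2 : 0 < Real.log (Real.exp 1 / t2) := by
      apply Real.log_pos
      rw [lt_div_iff₀ h2pos, one_mul]
      linarith
    have hle : Real.log (Real.exp 1 / t2) ≤ Real.log (Real.exp 1 / t1) := by
      apply Real.log_le_log (by positivity)
      exact div_le_div_of_nonneg_left (by positivity) h1pos h12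
    exact Real.rpow_le_rpow_of_nonpos hl2 hle (by linarith)

private lemma tail_bound {p : ℝ} (hp : 1 < p) {S : ℝ} (hS : 0 < S) (g : ℝ → ℝ)
    (hg : XpNorm p g ≤ ENNReal.ofReal S) {x : ℝ} (hx : 0 < x) :
    volume {s : ℝ | s ∈ Set.Icc (0:ℝ) 1 ∧ x < |g s|} ≤
      ENNReal.ofReal (Real.exp (1 - (x / S) ^ (p / (p - 1)))) := by
  have hp0 : (0:ℝ) < p := lt_trans one_pos hp
  have hp1 : (0:ℝ) < p - 1 := by linarith
  have hset : {s : ℝ | s ∈ Set.Icc (0:ℝ) 1 ∧ x < |g s|}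
      = {s : ℝ | s ∈ Set.Icc (0:ℝ) 1 ∧ x ^ p < |g s| ^ p} := by
    ext s
    simp only [Set.mem_setOf_eq, and_congr_right_iff]
    intro _
    constructor
    · intro h; exact Real.rpow_lt_rpow hx.le h hp0
    · intro h
      by_contra hc
      push_neg at hc
      exact absurd h (not_lt.mpr (Real.rpow_le_rpow (abs_nonneg _) hc hp0.le))
  rw [hset]
  set E := {s : ℝ | s ∈ Set.Icc (0:ℝ) 1 ∧ x ^ p < |g s| ^ p} with hE
  have hIccvol : volume (Set.Icc (0:ℝ) 1) = 1 := by
    rw [Real.volume_Icc]; norm_num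
  have hEle : volume E ≤ 1 := by
    rw [← hIccvol]; exact measure_mono (fun s hs => hs.1)
  have hEtop : volume E ≠ ⊤ := by
    exact ne_top_of_le_ne_top (by norm_num) hEle
  set d := (volume E).toReal with hd
  have hd0 : 0 ≤ d := ENNReal.toReal_nonneg
  have hd1 : d ≤ 1 := by
    have := ENNReal.toReal_mono (by norm_num : (1:ℝ≥0∞) ≠ ⊤) hEle
    simpa using this
  -- main estimate : Wp p d * x^p ≤ S^p
  have hI : (∫⁻ lam in Set.Ioi (0:ℝ), ENNReal.ofReal
      (Wp p (volume {s : ℝ | s ∈ Set.Icc (0:ℝ) 1 ∧ lam < |g s| ^ p}).toReal))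
      ≤ ENNReal.ofReal (S ^ p) := by
    have h1 : (XpNorm p g) ^ p ≤ (ENNReal.ofReal S) ^ p := ENNReal.rpow_le_rpow hg hp0.le
    rw [XpNorm, ← ENNReal.rpow_mul, one_div_mul_cancel (ne_of_gt hp0), ENNReal.rpow_one,
      ENNReal.ofReal_rpow_of_pos hS] at h1
    exact h1
  have hmono : ENNReal.ofReal (Wp p d) * ENNReal.ofReal (x ^ p)
      ≤ ENNReal.ofReal (S ^ p) := by
    refine le_trans ?_ hI
    have hconst : ENNReal.ofReal (Wp p d) * ENNReal.ofReal (x ^ p)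
        = ∫⁻ _ in Set.Ioc (0:ℝ) (x ^ p), ENNReal.ofReal (Wp p d) := by
      rw [setLIntegral_const, Real.volume_Ioc, sub_zero]
    rw [hconst]
    have step1 : (∫⁻ _ in Set.Ioc (0:ℝ) (x ^ p), ENNReal.ofReal (Wp p d))
        ≤ ∫⁻ lam in Set.Ioc (0:ℝ) (x ^ p), ENNReal.ofReal
            (Wp p (volume {s : ℝ | s ∈ Set.Icc (0:ℝ) 1 ∧ lam < |g s| ^ p}).toReal) := by
      refine setLIntegral_mono' measurableSet_Ioc (fun lam hlam => ?_)
      apply ENNReal.ofReal_le_ofReal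
      have hsub : E ⊆ {s : ℝ | s ∈ Set.Icc (0:ℝ) 1 ∧ lam < |g s| ^ p} := by
        intro s hs
        exact ⟨hs.1, lt_of_le_of_lt hlam.2 hs.2⟩
      have hvle : volume {s : ℝ | s ∈ Set.Icc (0:ℝ) 1 ∧ lam < |g s| ^ p} ≤ 1 := by
        rw [← hIccvol]; exact measure_mono (fun s hs => hs.1)
      have hdd : d ≤ (volume {s : ℝ | s ∈ Set.Icc (0:ℝ) 1 ∧ lam < |g s| ^ p}).toReal :=
        ENNReal.toReal_mono (ne_top_of_le_ne_top (by norm_num) hvle) (measure_mono hsub)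
      have hle1 : (volume {s : ℝ | s ∈ Set.Icc (0:ℝ) 1 ∧ lam < |g s| ^ p}).toReal ≤ 1 := by
        have := ENNReal.toReal_mono (by norm_num : (1:ℝ≥0∞) ≠ ⊤) hvle
        simpa using this
      exact wp_mono hp hd0 hdd hle1
    exact le_trans step1 (lintegral_mono_set Set.Ioc_subset_Ioi_self)
  have key : Wp p d * x ^ p ≤ S ^ p := by
    rw [← ENNReal.ofReal_mul (wp_nonneg hd0 hd1)] at hmono
    exact (ENNReal.ofReal_le_ofReal_iff (by positivity)).mp hmono
  -- deduce d ≤ exp(1 - (x/S)^(p/(p-1)))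
  have hd_exp : d ≤ Real.exp (1 - (x / S) ^ (p / (p - 1))) := by
    rcases eq_or_lt_of_le hd0 with h0 | hdpos
    · rw [← h0]; exact (Real.exp_pos _).le
    · have hWp : Wp p d = Real.log (Real.exp 1 / d) ^ (1 - p) := by
        unfold Wp; rw [if_neg (ne_of_gt hdpos)]
      set L := Real.log (Real.exp 1 / d) with hL
      have hexp2 : (2:ℝ) ≤ Real.exp 1 := by have := Real.add_one_le_exp 1; linarith
      have hL1 : 1 ≤ L := by
        rw [hL]
        have h1 : Real.exp 1 ≤ Real.exp 1 / d := by
          rw [le_div_iff₀ hdpos]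
          nlinarith
        calc (1:ℝ) = Real.log (Real.exp 1) := (Real.log_exp 1).symm
          _ ≤ Real.log (Real.exp 1 / d) := Real.log_le_log (Real.exp_pos 1) h1
      have hL0 : 0 < L := lt_of_lt_of_le one_pos hL1
      have hLpow : 0 < L ^ (p - 1) := Real.rpow_pos_of_pos hL0 _
      have h2 : x ^ p ≤ S ^ p * L ^ (p - 1) := by
        have hkey2 : (L ^ (p-1))⁻¹ * x ^ p ≤ S ^ p := by
          have : L ^ (1 - p) = (L ^ (p-1))⁻¹ := by
            rw [← Real.rpow_neg hL0.le]
            norm_num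
          rw [hWp, this] at key
          exact key
        rw [inv_mul_le_iff₀ hLpow] at hkey2
        calc x ^ p ≤ L ^ (p-1) * S ^ p := hkey2
          _ = S ^ p * L ^ (p-1) := by ring
      have h3 : (x / S) ^ (p / (p - 1)) ≤ L := by
        have hxS0 : 0 ≤ x / S := by positivity
        have h4 : (x / S) ^ p ≤ L ^ (p - 1) := by
          rw [Real.div_rpow hx.le hS.le, div_le_iff₀ (by positivity : (0:ℝ) < S ^ p)]
          calc x ^ p ≤ S ^ p * L ^ (p-1) := h2
            _ = L ^ (p-1) * S ^ p := by ring
        calc (x / S) ^ (p / (p - 1)) = ((x / S) ^ p) ^ (1 / (p - 1)) := by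
              rw [← Real.rpow_mul hxS0]
              congr 1
              field_simp
          _ ≤ (L ^ (p - 1)) ^ (1 / (p - 1)) :=
              Real.rpow_le_rpow (Real.rpow_nonneg hxS0 _) h4 (by positivity)
          _ = L := by
              rw [← Real.rpow_mul hL0.le, mul_one_div_cancel (ne_of_gt hp1), Real.rpow_one]
      have hdL : d = Real.exp 1 * Real.exp (-L) := by
        have hexpL : Real.exp L = Real.exp 1 / d := Real.exp_log (by positivity)
        rw [Real.exp_neg]
        field_simp [hexpL]
        rw [hexpL]
        field_simp
      rw [hdL, ← Real.exp_add]
      apply Real.exp_le_exp.mpr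
      linarith
  calc volume E = ENNReal.ofReal d := (ENNReal.ofReal_toReal hEtop).symm
    _ ≤ _ := ENNReal.ofReal_le_ofReal hd_exp

private lemma exp_tail_integral {S : ℝ} (hS : 0 < S) :
    (∫⁻ u in Set.Ioi (0:ℝ), ENNReal.ofReal (Real.exp (-(u / S)))) ≤ ENNReal.ofReal (2 * S) := by
  have hsub : Set.Ioi (0:ℝ) ⊆ ⋃ j : ℕ, Set.Ioc ((j:ℝ) * S) (((j:ℝ) + 1) * S) := by
    intro u hu
    have hu0 : (0:ℝ) < u := hu
    have hdiv : 0 < u / S := div_pos hu0 hS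
    have h1 : 1 ≤ ⌈u / S⌉₊ := Nat.one_le_ceil_iff.mpr hdiv
    refine Set.mem_iUnion.mpr ⟨⌈u / S⌉₊ - 1, ?_⟩
    have hcast : ((⌈u / S⌉₊ - 1 : ℕ) : ℝ) = (⌈u / S⌉₊ : ℝ) - 1 := by
      rw [Nat.cast_sub h1, Nat.cast_one]
    have hceil_lt : (⌈u / S⌉₊ : ℝ) < u / S + 1 := Nat.ceil_lt_add_one hdiv.le
    have hle_ceil : u / S ≤ (⌈u / S⌉₊ : ℝ) := Nat.le_ceil _
    constructor
    · rw [hcast, sub_mul, one_mul]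
      have : ((⌈u / S⌉₊ : ℝ)) * S < u + S := by
        have := mul_lt_mul_of_pos_right hceil_lt hS
        rw [add_mul, one_mul, div_mul_cancel₀ _ (ne_of_gt hS)] at this
        exact this
      linarith
    · rw [hcast, sub_add_cancel]
      have := mul_le_mul_of_nonneg_right hle_ceil hS.le
      rwa [div_mul_cancel₀ _ (ne_of_gt hS)] at this
  have hpiece : ∀ j : ℕ, (∫⁻ u in Set.Ioc ((j:ℝ) * S) (((j:ℝ) + 1) * S),
      ENNReal.ofReal (Real.exp (-(u / S))))
      ≤ ENNReal.ofReal (Real.exp (-1)) ^ j * ENNReal.ofReal S := by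
    intro j
    have hb : ∀ u ∈ Set.Ioc ((j:ℝ) * S) (((j:ℝ) + 1) * S),
        ENNReal.ofReal (Real.exp (-(u / S))) ≤ ENNReal.ofReal (Real.exp (-(j:ℝ))) := by
      intro u hu
      apply ENNReal.ofReal_le_ofReal
      apply Real.exp_le_exp.mpr
      have : (j:ℝ) ≤ u / S := (le_div_iff₀ hS).mpr hu.1.le
      linarith
    calc (∫⁻ u in Set.Ioc ((j:ℝ) * S) (((j:ℝ) + 1) * S), ENNReal.ofReal (Real.exp (-(u / S))))
        ≤ ∫⁻ _ in Set.Ioc ((j:ℝ) * S) (((j:ℝ) + 1) * S), ENNReal.ofReal (Real.exp (-(j:ℝ))) :=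
          setLIntegral_mono' measurableSet_Ioc hb
      _ = ENNReal.ofReal (Real.exp (-(j:ℝ))) * volume (Set.Ioc ((j:ℝ) * S) (((j:ℝ) + 1) * S)) :=
          setLIntegral_const _ _
      _ = ENNReal.ofReal (Real.exp (-1)) ^ j * ENNReal.ofReal S := by
          rw [Real.volume_Ioc]
          congr 1
          · rw [show -(j:ℝ) = (j:ℝ) * (-1) by ring, Real.exp_nat_mul,
              ENNReal.ofReal_pow (Real.exp_nonneg _)]
          · congr 1; ring
  calc (∫⁻ u in Set.Ioi (0:ℝ), ENNReal.ofReal (Real.exp (-(u / S))))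
      ≤ ∫⁻ u in ⋃ j : ℕ, Set.Ioc ((j:ℝ) * S) (((j:ℝ) + 1) * S),
          ENNReal.ofReal (Real.exp (-(u / S))) := lintegral_mono_set hsub
    _ ≤ ∑' j : ℕ, ∫⁻ u in Set.Ioc ((j:ℝ) * S) (((j:ℝ) + 1) * S),
          ENNReal.ofReal (Real.exp (-(u / S))) := lintegral_iUnion_le _ _
    _ ≤ ∑' j : ℕ, ENNReal.ofReal (Real.exp (-1)) ^ j * ENNReal.ofReal S :=
          ENNReal.tsum_le_tsum hpiece
    _ = (∑' j : ℕ, ENNReal.ofReal (Real.exp (-1)) ^ j) * ENNReal.ofReal S :=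
          ENNReal.tsum_mul_right
    _ ≤ 2 * ENNReal.ofReal S := by
        rw [ENNReal.tsum_geometric]
        refine mul_le_mul_left ?_ _
        have hexp2 : (2:ℝ) ≤ Real.exp 1 := by have := Real.add_one_le_exp 1; linarith
        have hr : ENNReal.ofReal (Real.exp (-1)) ≤ ENNReal.ofReal (1/2) := by
          apply ENNReal.ofReal_le_ofReal
          rw [Real.exp_neg]
          rw [inv_le_comm₀ (Real.exp_pos 1) (by norm_num)]
          linarith
        have h12 : (1:ℝ≥0∞) - ENNReal.ofReal (1/2) ≤ 1 - ENNReal.ofReal (Real.exp (-1)) :=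
          tsub_le_tsub_left hr 1
        have hhalf : (1:ℝ≥0∞) - ENNReal.ofReal (1/2) = ENNReal.ofReal (1/2) := by
          rw [← ENNReal.ofReal_one, ← ENNReal.ofReal_sub _ (by norm_num)]
          norm_num
        have hinv : (1 - ENNReal.ofReal (Real.exp (-1)))⁻¹ ≤ (ENNReal.ofReal (1/2))⁻¹ := by
          apply ENNReal.inv_le_inv'
          rw [← hhalf]
          exact h12
        refine le_trans hinv ?_
        rw [show ENNReal.ofReal (1/2 : ℝ) = 2⁻¹ by
          rw [one_div, ENNReal.ofReal_inv_of_pos (by norm_num), ENNReal.ofReal_ofNat]]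
        rw [inv_inv]
    _ = ENNReal.ofReal (2 * S) := by
        rw [ENNReal.ofReal_mul (by norm_num)]
        congr 1
        exact (ENNReal.ofReal_ofNat 2).symm

set_option maxHeartbeats 1000000 in
private lemma key_estimate_s12 {p : ℝ} (hp : 1 < p) {n : ℕ} {f : Fin n → ℝ → ℝ}
    (hmeas : ∀ k, Measurable (f k)) {S : ℝ} (hS : 0 < S)
    (hbound : ∀ ε : Fin n → ({-1, 1} : Set ℝ),
      XpNorm p (fun t => ∑ k, (ε k : ℝ) * f k t) ≤ ENNReal.ofReal S)
    {t : ℝ} (ht : 0 < t) :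
    t * (Nat.card {k : Fin n // t < |(eLpNorm (f k) 1 mu01).toReal|} : ℝ) ^ (1 / p) ≤ 5 * S := by
  classical
  have hp0 : (0:ℝ) < p := lt_trans one_pos hp
  have hp1 : (0:ℝ) < p - 1 := by linarith
  set a : Fin n → ℝ := fun k => (eLpNorm (f k) 1 mu01).toReal with ha
  set A : Finset (Fin n) := Finset.univ.filter (fun k => t < |a k|) with hA
  have hcard : (Nat.card {k : Fin n // t < |(eLpNorm (f k) 1 mu01).toReal|} : ℝ)
      = (A.card : ℝ) := by
    rw [Nat.card_eq_fintype_card]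
    norm_cast
    convert Fintype.card_subtype (fun k : Fin n => t < |a k|)
  rw [hcard]
  set m := A.card with hm
  by_cases hm0 : m = 0
  · rw [hm0]
    rw [Nat.cast_zero, Real.zero_rpow (by positivity : (1:ℝ)/p ≠ 0), mul_zero]
    positivity
  have hm1 : 1 ≤ m := Nat.one_le_iff_ne_zero.mpr hm0
  have hmR : (1:ℝ) ≤ (m:ℝ) := by exact_mod_cast hm1
  have hmpos : (0:ℝ) < m := by linarith
  -- sign patterns
  set ι := (({k : Fin n // k ∈ A} → Bool) × Bool) with hι
  let sgn : Bool → ℝ := fun b => if b then 1 else -1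
  have hsgn_mem : ∀ b, sgn b ∈ ({-1, 1} : Set ℝ) := by
    intro b; cases b <;> simp [sgn]
  let eps : ι → Fin n → ({-1, 1} : Set ℝ) :=
    fun i k => if h : k ∈ A then ⟨sgn (i.1 ⟨k, h⟩), hsgn_mem _⟩ else ⟨sgn i.2, hsgn_mem _⟩
  let F : ι → ℝ → ℝ := fun i s => ∑ k, (eps i k : ℝ) * f k s
  have hFcoe : ∀ (i : ι) (k : Fin n),
      (eps i k : ℝ) = if h : k ∈ A then sgn (i.1 ⟨k, h⟩) else sgn i.2 := by
    intro i k
    by_cases h : k ∈ A <;> simp [eps, h]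
  have hFmeas : ∀ i, Measurable (F i) := by
    intro i
    exact Finset.measurable_sum _ (fun k _ => (hmeas k).const_mul _)
  have hFX : ∀ i, XpNorm p (F i) ≤ ENNReal.ofReal S := fun i => hbound (eps i)
  -- numbers
  set Nr : ℝ := 2 ^ (m + 1) with hNr
  have hNrpos : (0:ℝ) < Nr := by positivity
  set ai : ℝ := (p - 1) / p with hai
  have hai0 : 0 ≤ ai := by positivity
  have hai1 : ai ≤ 1 := by
    rw [hai, div_le_one hp0]; linarith
  set x0 : ℝ := (1 + Real.log Nr) ^ ai with hx0
  set u0 : ℝ := S * x0 with hu0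
  have hlog2 : Real.log 2 ≤ 1 := by
    have := Real.log_le_sub_one_of_pos (by norm_num : (0:ℝ) < 2)
    linarith
  have hlogN : Real.log Nr = ((m:ℝ) + 1) * Real.log 2 := by
    rw [hNr, Real.log_pow]; push_cast; ring
  have hlogN0 : 0 ≤ Real.log Nr := by
    rw [hlogN]
    have : (0:ℝ) ≤ Real.log 2 := Real.log_nonneg (by norm_num)
    positivity
  have hx0_one : 1 ≤ x0 := Real.one_le_rpow (by linarith) hai0
  have hu0pos : 0 < u0 := by
    rw [hu0]; positivity
  -- tail bound for each pattern
  have htail : ∀ (i : ι) (u : ℝ), 0 < u →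
      mu01 {s : ℝ | u + u0 < |F i s|} ≤ ENNReal.ofReal ((1 / Nr) * Real.exp (-(u / S))) := by
    intro i u hu
    have hmu : mu01 {s : ℝ | u + u0 < |F i s|}
        = volume {s : ℝ | s ∈ Set.Icc (0:ℝ) 1 ∧ u + u0 < |F i s|} := by
      rw [mu01, Measure.restrict_apply (measurableSet_lt measurable_const (hFmeas i).abs)]
      congr 1
      ext s
      simp only [Set.mem_inter_iff, Set.mem_setOf_eq]
      tauto
    rw [hmu]
    refine le_trans (tail_bound hp hS (F i) (hFX i) (by positivity : (0:ℝ) < u + u0)) ?_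
    apply ENNReal.ofReal_le_ofReal
    set q : ℝ := p / (p - 1) with hq
    have hq1 : 1 ≤ q := by
      rw [hq, le_div_iff₀ hp1]; linarith
    have hdiv : (u + u0) / S = u / S + x0 := by
      rw [hu0, add_div, mul_comm S x0, mul_div_assoc, div_self (ne_of_gt hS), mul_one]
    have hx0q : x0 ^ q = 1 + Real.log Nr := by
      rw [hx0, ← Real.rpow_mul (by linarith : (0:ℝ) ≤ 1 + Real.log Nr)]
      rw [show ai * q = 1 by rw [hai, hq]; field_simp]
      exact Real.rpow_one _
    have hv : 0 < u / S := div_pos hu hS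
    have hbase : (0:ℝ) < u / S + x0 := by linarith
    have hkeyexp : (1 + Real.log Nr) + u / S ≤ ((u + u0) / S) ^ q := by
      rw [hdiv]
      have e1 : (u / S + x0) ^ q = (u / S + x0) ^ (q - 1) * (u / S + x0) := by
        rw [← Real.rpow_add_one (ne_of_gt hbase) (q - 1), sub_add_cancel]
      have e2 : x0 ^ (q - 1) ≤ (u / S + x0) ^ (q - 1) :=
        Real.rpow_le_rpow (by linarith) (by linarith) (by linarith)
      have e3 : (1:ℝ) ≤ x0 ^ (q - 1) := Real.one_le_rpow hx0_one (by linarith)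
      have e4 : x0 ^ (q - 1) * x0 = x0 ^ q := by
        rw [← Real.rpow_add_one (by positivity : x0 ≠ 0) (q - 1), sub_add_cancel]
      have e5 : x0 ^ (q - 1) * (u / S + x0) ≤ (u / S + x0) ^ (q - 1) * (u / S + x0) := by
        apply mul_le_mul_of_nonneg_right e2 (by linarith)
      have e6 : x0 ^ q + u / S ≤ x0 ^ (q - 1) * (u / S + x0) := by
        have : x0 ^ (q - 1) * (u / S + x0) = x0 ^ (q - 1) * (u / S) + x0 ^ q := by
          rw [mul_add, e4]
        rw [this]
        have : u / S ≤ x0 ^ (q - 1) * (u / S) := le_mul_of_one_le_left hv.le e3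
        linarith
      rw [e1] at *
      rw [← hx0q]
      linarith
    calc Real.exp (1 - ((u + u0) / S) ^ q)
        ≤ Real.exp (1 - ((1 + Real.log Nr) + u / S)) := by
          apply Real.exp_le_exp.mpr; linarith
      _ = (1 / Nr) * Real.exp (-(u / S)) := by
          rw [show (1:ℝ) - ((1 + Real.log Nr) + u / S) = -Real.log Nr + -(u / S) by ring,
            Real.exp_add, Real.exp_neg (Real.log Nr), Real.exp_log hNrpos, one_div]
  -- integral bound for each pattern
  have hint : ∀ i : ι, (∫⁻ s, ENNReal.ofReal (max (|F i s| - u0) 0) ∂mu01)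
      ≤ ENNReal.ofReal (1 / Nr) * ENNReal.ofReal (2 * S) := by
    intro i
    have hlc := lintegral_eq_lintegral_meas_lt mu01
      (f := fun s => max (|F i s| - u0) 0)
      (Filter.Eventually.of_forall (fun s => le_max_right _ _))
      (((hFmeas i).abs.sub measurable_const).max measurable_const).aemeasurable
    rw [hlc]
    have hsets : ∀ u ∈ Set.Ioi (0:ℝ), mu01 {s : ℝ | u < max (|F i s| - u0) 0}
        ≤ ENNReal.ofReal ((1 / Nr) * Real.exp (-(u / S))) := by
      intro u hu
      have hu0' : (0:ℝ) < u := hu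
      have hseteq : {s : ℝ | u < max (|F i s| - u0) 0} = {s : ℝ | u + u0 < |F i s|} := by
        ext s
        simp only [Set.mem_setOf_eq, lt_max_iff]
        constructor
        · rintro (h | h)
          · linarith
          · linarith
        · intro h; left; linarith
      rw [hseteq]
      exact htail i u hu0'
    calc (∫⁻ u in Set.Ioi (0:ℝ), mu01 {s : ℝ | u < max (|F i s| - u0) 0})
        ≤ ∫⁻ u in Set.Ioi (0:ℝ), ENNReal.ofReal ((1 / Nr) * Real.exp (-(u / S))) :=
          setLIntegral_mono' measurableSet_Ioi hsets
      _ = ENNReal.ofReal (1 / Nr) * ∫⁻ u in Set.Ioi (0:ℝ),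
            ENNReal.ofReal (Real.exp (-(u / S))) := by
          simp_rw [ENNReal.ofReal_mul (by positivity : (0:ℝ) ≤ 1 / Nr)]
          rw [lintegral_const_mul' _ _ ENNReal.ofReal_ne_top]
      _ ≤ ENNReal.ofReal (1 / Nr) * ENNReal.ofReal (2 * S) :=
          mul_le_mul_right (exp_tail_integral hS) _
  -- lower bound: t * m ≤ sum of L1 norms
  have hsum1 : ENNReal.ofReal t * (m : ℝ≥0∞) ≤ ∑ k ∈ A, eLpNorm (f k) 1 mu01 := by
    have : ∀ k ∈ A, ENNReal.ofReal t ≤ eLpNorm (f k) 1 mu01 := by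
      intro k hk
      have hk' : t < |a k| := (Finset.mem_filter.mp hk).2
      by_cases htop : eLpNorm (f k) 1 mu01 = ⊤
      · rw [htop]; exact le_top
      · have hak : a k = (eLpNorm (f k) 1 mu01).toReal := rfl
        have hnn : 0 ≤ a k := ENNReal.toReal_nonneg
        rw [abs_of_nonneg hnn] at hk'
        calc ENNReal.ofReal t ≤ ENNReal.ofReal (a k) := ENNReal.ofReal_le_ofReal hk'.le
          _ = eLpNorm (f k) 1 mu01 := by rw [hak, ENNReal.ofReal_toReal htop]
    calc ENNReal.ofReal t * (m : ℝ≥0∞) = ∑ _k ∈ A, ENNReal.ofReal t := by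
          rw [Finset.sum_const, hm, nsmul_eq_mul, mul_comm]
      _ ≤ ∑ k ∈ A, eLpNorm (f k) 1 mu01 := Finset.sum_le_sum this
  -- sum of L1 norms as integral
  have hsum2 : ∑ k ∈ A, eLpNorm (f k) 1 mu01
      = ∫⁻ s, ENNReal.ofReal (∑ k ∈ A, |f k s|) ∂mu01 := by
    have h1 : ∀ k ∈ A, eLpNorm (f k) 1 mu01 = ∫⁻ s, ENNReal.ofReal |f k s| ∂mu01 := by
      intro k _
      rw [eLpNorm_one_eq_lintegral_enorm]
      congr 1
      funext s
      exact Real.enorm_eq_ofReal_abs _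
    rw [Finset.sum_congr rfl h1,
      ← lintegral_finset_sum _ (fun k _ => (hmeas k).abs.ennreal_ofReal)]
    congr 1
    funext s
    exact (ENNReal.ofReal_sum_of_nonneg (fun k _ => abs_nonneg _)).symm
  -- pointwise domination
  have hpoint : ∀ s : ℝ, (∑ k ∈ A, |f k s|)
      ≤ u0 + ∑ i : ι, max (|F i s| - u0) 0 := by
    intro s
    set b0 : {k : Fin n // k ∈ A} → Bool := fun k => decide (0 ≤ f k.1 s) with hb0
    have hkey : F (b0, true) s + F (b0, false) s = 2 * ∑ k ∈ A, |f k s| := by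
      have hterm : ∀ k : Fin n, (eps (b0, true) k : ℝ) * f k s + (eps (b0, false) k : ℝ) * f k s
          = if k ∈ A then 2 * |f k s| else 0 := by
        intro k
        rw [hFcoe, hFcoe]
        by_cases h : k ∈ A
        · rw [dif_pos h, dif_pos h, if_pos h]
          show sgn (b0 ⟨k, h⟩) * f k s + sgn (b0 ⟨k, h⟩) * f k s = 2 * |f k s|
          by_cases hfk : 0 ≤ f k s
          · have hb : b0 ⟨k, h⟩ = true := by simp [hb0, hfk]
            rw [hb]
            show (1:ℝ) * f k s + 1 * f k s = 2 * |f k s|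
            rw [abs_of_nonneg hfk]; ring
          · push_neg at hfk
            have hb : b0 ⟨k, h⟩ = false := by simp [hb0, not_le.mpr hfk]
            rw [hb]
            show (-1:ℝ) * f k s + -1 * f k s = 2 * |f k s|
            rw [abs_of_neg hfk]; ring
        · rw [dif_neg h, dif_neg h, if_neg h]
          show (1:ℝ) * f k s + -1 * f k s = 0
          ring
      calc F (b0, true) s + F (b0, false) s
          = ∑ k, ((eps (b0, true) k : ℝ) * f k s + (eps (b0, false) k : ℝ) * f k s) := by
            rw [← Finset.sum_add_distrib]
        _ = ∑ k, (if k ∈ A then 2 * |f k s| else 0) := Finset.sum_congr rfl (fun k _ => hterm k)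
        _ = ∑ k ∈ A, 2 * |f k s| := by
            rw [Finset.sum_ite_mem, Finset.univ_inter]
        _ = 2 * ∑ k ∈ A, |f k s| := by rw [Finset.mul_sum]
    have h1 : ∑ k ∈ A, |f k s| ≤ max |F (b0, true) s| |F (b0, false) s| := by
      have l1 := le_abs_self (F (b0, true) s)
      have l2 := le_abs_self (F (b0, false) s)
      have l3 := le_max_left |F (b0, true) s| |F (b0, false) s|
      have l4 := le_max_right |F (b0, true) s| |F (b0, false) s|
      linarith
    obtain ⟨i0, hi0⟩ : ∃ i0 : ι, ∑ k ∈ A, |f k s| ≤ |F i0 s| := by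
      rcases max_choice |F (b0, true) s| |F (b0, false) s| with h | h
      · exact ⟨(b0, true), h ▸ h1⟩
      · exact ⟨(b0, false), h ▸ h1⟩
    calc ∑ k ∈ A, |f k s| ≤ |F i0 s| := hi0
      _ ≤ u0 + max (|F i0 s| - u0) 0 := by
          have := le_max_left (|F i0 s| - u0) 0
          linarith
      _ ≤ u0 + ∑ i : ι, max (|F i s| - u0) 0 := by
          have hone : max (|F i0 s| - u0) 0 ≤ ∑ i : ι, max (|F i s| - u0) 0 :=
            Finset.single_le_sum (f := fun i : ι => max (|F i s| - u0) 0)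
              (fun i _ => le_max_right _ _) (Finset.mem_univ i0)
          linarith
  -- grand chain
  have hmu_univ : mu01 Set.univ = 1 := by
    rw [mu01, Measure.restrict_apply_univ, Real.volume_Icc]
    norm_num
  have hcardι : ((Fintype.card ι : ℕ) : ℝ) = Nr := by
    have h1 : Fintype.card ι = 2 ^ m * 2 := by
      show Fintype.card (({k : Fin n // k ∈ A} → Bool) × Bool) = 2 ^ m * 2
      rw [Fintype.card_prod, Fintype.card_fun, Fintype.card_bool, Fintype.card_coe]
    rw [h1, hNr]
    push_cast
    ring
  have main : ENNReal.ofReal (t * m) ≤ ENNReal.ofReal (u0 + 2 * S) := by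
    calc ENNReal.ofReal (t * m)
        = ENNReal.ofReal t * (m : ℝ≥0∞) := by
          rw [ENNReal.ofReal_mul ht.le, ENNReal.ofReal_natCast]
      _ ≤ ∑ k ∈ A, eLpNorm (f k) 1 mu01 := hsum1
      _ = ∫⁻ s, ENNReal.ofReal (∑ k ∈ A, |f k s|) ∂mu01 := hsum2
      _ ≤ ∫⁻ s, (ENNReal.ofReal u0 + ∑ i : ι, ENNReal.ofReal (max (|F i s| - u0) 0)) ∂mu01 := by
          apply lintegral_mono
          intro s
          calc ENNReal.ofReal (∑ k ∈ A, |f k s|)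
              ≤ ENNReal.ofReal (u0 + ∑ i : ι, max (|F i s| - u0) 0) :=
                ENNReal.ofReal_le_ofReal (hpoint s)
            _ = ENNReal.ofReal u0 + ENNReal.ofReal (∑ i : ι, max (|F i s| - u0) 0) :=
                ENNReal.ofReal_add hu0pos.le
                  (Finset.sum_nonneg (fun i _ => le_max_right _ _))
            _ = ENNReal.ofReal u0 + ∑ i : ι, ENNReal.ofReal (max (|F i s| - u0) 0) := by
                rw [ENNReal.ofReal_sum_of_nonneg (fun i _ => le_max_right _ _)]
      _ = ENNReal.ofReal u0 * mu01 Set.univ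
          + ∑ i : ι, ∫⁻ s, ENNReal.ofReal (max (|F i s| - u0) 0) ∂mu01 := by
          rw [lintegral_add_left measurable_const, lintegral_const,
            lintegral_finset_sum _ (f := fun i s => ENNReal.ofReal (max (|F i s| - u0) 0)) (fun i _ =>
              (((hFmeas i).abs.sub measurable_const).max measurable_const).ennreal_ofReal)]
      _ ≤ ENNReal.ofReal u0 + ∑ _i : ι, ENNReal.ofReal (1 / Nr) * ENNReal.ofReal (2 * S) := by
          rw [hmu_univ, mul_one]
          exact add_le_add le_rfl (Finset.sum_le_sum (fun i _ => hint i))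
      _ = ENNReal.ofReal u0 + ENNReal.ofReal (u0 + 2 * S - u0) := by
          congr 1
          rw [Finset.sum_const, Finset.card_univ, nsmul_eq_mul,
            ← ENNReal.ofReal_natCast (Fintype.card ι), hcardι, ← mul_assoc,
            ← ENNReal.ofReal_mul (le_of_lt hNrpos),
            mul_one_div, div_self (ne_of_gt hNrpos), ENNReal.ofReal_one, one_mul]
          congr 1
          ring
      _ = ENNReal.ofReal (u0 + 2 * S) := by
          rw [← ENNReal.ofReal_add hu0pos.le (by linarith)]
          congr 1
          ring
  have hreal : t * m ≤ u0 + 2 * S :=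
    (ENNReal.ofReal_le_ofReal_iff (by positivity)).mp main
  -- final algebra
  have h3m : (1:ℝ) + Real.log Nr ≤ 3 * m := by
    rw [hlogN]
    nlinarith
  have hx0le : x0 ≤ 3 * (m:ℝ) ^ ai := by
    rw [hx0]
    calc (1 + Real.log Nr) ^ ai ≤ (3 * m) ^ ai :=
          Real.rpow_le_rpow (by linarith) h3m hai0
      _ = 3 ^ ai * (m:ℝ) ^ ai := Real.mul_rpow (by norm_num) (Nat.cast_nonneg m)
      _ ≤ 3 * (m:ℝ) ^ ai := by
          have h31 : (3:ℝ) ^ ai ≤ 3 := by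
            calc (3:ℝ) ^ ai ≤ 3 ^ (1:ℝ) :=
                  Real.rpow_le_rpow_of_exponent_le (by norm_num) hai1
              _ = 3 := Real.rpow_one 3
          have hmn : (0:ℝ) ≤ (m:ℝ) ^ ai := Real.rpow_nonneg (Nat.cast_nonneg m) ai
          nlinarith
  have hm_ai1 : (1:ℝ) ≤ (m:ℝ) ^ ai := Real.one_le_rpow hmR hai0
  have halg : t * m ≤ 5 * S * (m:ℝ) ^ ai := by
    calc t * m ≤ u0 + 2 * S := hreal
      _ = S * x0 + 2 * S := by rw [hu0]
      _ ≤ S * (3 * (m:ℝ) ^ ai) + 2 * S * ((m:ℝ) ^ ai) := by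
          have e1 : S * x0 ≤ S * (3 * (m:ℝ) ^ ai) := by
            apply mul_le_mul_of_nonneg_left hx0le hS.le
          have e2 : 2 * S ≤ 2 * S * ((m:ℝ) ^ ai) := by
            nlinarith
          linarith
      _ = 5 * S * (m:ℝ) ^ ai := by ring
  have hmpow : (m:ℝ) ^ ((1:ℝ) / p) * (m:ℝ) ^ ai = (m:ℝ) := by
    rw [← Real.rpow_add hmpos, show (1:ℝ) / p + ai = 1 by rw [hai]; field_simp; ring,
      Real.rpow_one]
  have hpospow : (0:ℝ) < (m:ℝ) ^ ai := Real.rpow_pos_of_pos hmpos _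
  have : (t * (m:ℝ) ^ ((1:ℝ) / p)) * ((m:ℝ) ^ ai) ≤ (5 * S) * ((m:ℝ) ^ ai) := by
    calc (t * (m:ℝ) ^ ((1:ℝ) / p)) * ((m:ℝ) ^ ai)
        = t * ((m:ℝ) ^ ((1:ℝ) / p) * (m:ℝ) ^ ai) := by ring
      _ = t * m := by rw [hmpow]
      _ ≤ 5 * S * (m:ℝ) ^ ai := halg
  exact le_of_mul_le_mul_right this hpospow


/-- Corollary: for `1 < p < 2`, the inclusion `X_p ⊂ L^1` is
`(ℓ^{p,∞},1)`-absolutely summing. -/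
theorem Xp_subset_L1_weak_lp_summing (p : ℝ) (hp : 1 < p) (hp2 : p < 2) :
    ∃ c : ℝ, 0 < c ∧ ∀ (n : ℕ) (f : Fin n → ℝ → ℝ),
      (∀ k, Measurable (f k)) → (∀ k, XpNorm p (f k) ≠ ⊤) →
      ENNReal.ofReal (weakLq p fun k => (eLpNorm (f k) 1 mu01).toReal) ≤
        ENNReal.ofReal c *
          ⨆ ε : Fin n → ({-1, 1} : Set ℝ),
            XpNorm p (fun t => ∑ k, (ε k : ℝ) * f k t) := by
  refine ⟨5, by norm_num, ?_⟩
  intro n f hmeas _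
  set Ssup := ⨆ ε : Fin n → ({-1, 1} : Set ℝ),
      XpNorm p (fun t => ∑ k, (ε k : ℝ) * f k t) with hSsup
  by_cases hT : Ssup = ⊤
  · rw [hT, ENNReal.mul_top (by simp : ENNReal.ofReal 5 ≠ 0)]
    exact le_top
  · have hTnn : 0 ≤ Ssup.toReal := ENNReal.toReal_nonneg
    have hW : weakLq p (fun k => (eLpNorm (f k) 1 mu01).toReal) ≤ 5 * Ssup.toReal := by
      haveI : Nonempty (Set.Ioi (0:ℝ)) := ⟨⟨1, by norm_num⟩⟩
      rw [weakLq]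
      refine ciSup_le (fun tt => ?_)
      have htt : (0:ℝ) < tt.1 := tt.2
      have hterm : ∀ δ : ℝ, 0 < δ →
          tt.1 * (Nat.card {k : Fin n // tt.1 < |(eLpNorm (f k) 1 mu01).toReal|} : ℝ) ^ (1 / p)
            ≤ 5 * (Ssup.toReal + δ) := by
        intro δ hδ
        refine key_estimate_s12 hp hmeas (by linarith : 0 < Ssup.toReal + δ) ?_ htt
        intro ε
        calc XpNorm p (fun t => ∑ k, (ε k : ℝ) * f k t) ≤ Ssup :=
              le_iSup (fun ε : Fin n → ({-1, 1} : Set ℝ) =>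
                XpNorm p (fun t => ∑ k, (ε k : ℝ) * f k t)) ε
          _ = ENNReal.ofReal Ssup.toReal := (ENNReal.ofReal_toReal hT).symm
          _ ≤ ENNReal.ofReal (Ssup.toReal + δ) := ENNReal.ofReal_le_ofReal (by linarith)
      by_contra hcon
      push_neg at hcon
      set L := tt.1 * (Nat.card {k : Fin n // tt.1 <
          |(eLpNorm (f k) 1 mu01).toReal|} : ℝ) ^ (1 / p) with hL
      have hd : 0 < (L - 5 * Ssup.toReal) / 10 := by
        have : 5 * Ssup.toReal < L := hcon
        linarith
      have h2 := hterm _ hd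
      have h3 : L ≤ 5 * Ssup.toReal + (L - 5 * Ssup.toReal) / 2 := by
        calc L ≤ 5 * (Ssup.toReal + (L - 5 * Ssup.toReal) / 10) := h2
          _ = 5 * Ssup.toReal + (L - 5 * Ssup.toReal) / 2 := by ring
      have : 5 * Ssup.toReal < L := hcon
      linarith
    calc ENNReal.ofReal (weakLq p fun k => (eLpNorm (f k) 1 mu01).toReal)
        ≤ ENNReal.ofReal (5 * Ssup.toReal) := ENNReal.ofReal_le_ofReal hW
      _ = ENNReal.ofReal 5 * ENNReal.ofReal Ssup.toReal := ENNReal.ofReal_mul (by norm_num)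
      _ = ENNReal.ofReal 5 * Ssup := by rw [ENNReal.ofReal_toReal hT]
end

section
/- Let n ∈ ℕ, let f_1, …, f_n ∈ L^1[0,1] satisfy ‖f_k‖_{L^1} = 1 for all k, and let a_1, …, a_n be real numbers. Then there exist signs δ_1, …, δ_n ∈ {-1, 1} such that ∫_0^1 |Σ_{k=1}^n δ_k a_k f_k(t)| dt ≥ (1/√2) · (Σ_{k=1}^n a_k²)^{1/2}. -/
open MeasureTheory
open scoped ENNReal

namespace Kh
variable {n : ℕ}

def sg (b : Bool) : ℝ := if b then 1 else -1

lemma sg_mul_self (b : Bool) : sg b * sg b = 1 := by cases b <;> simp [sg]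
lemma sg_not (b : Bool) : sg (!b) = - sg b := by cases b <;> simp [sg]

noncomputable def w (S : Finset (Fin n)) (ε : Fin n → Bool) : ℝ := ∏ i ∈ S, sg (ε i)

lemma sum_w (S : Finset (Fin n)) :
    ∑ ε : Fin n → Bool, w S ε = if S = ∅ then (2:ℝ)^n else 0 := by
  have h1 : ∀ ε : Fin n → Bool, w S ε = ∏ i : Fin n, (if i ∈ S then sg (ε i) else 1) := by
    intro ε
    rw [Finset.prod_ite_mem Finset.univ S (fun i => sg (ε i)), Finset.univ_inter]
    rfl
  simp_rw [h1]
  rw [← Fintype.prod_sum (fun (i : Fin n) (b : Bool) => if i ∈ S then sg b else 1)]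
  have h2 : ∀ i : Fin n, (∑ b : Bool, if i ∈ S then sg b else 1) = if i ∈ S then 0 else 2 := by
    intro i; by_cases h : i ∈ S <;> simp [h, sg]
  simp_rw [h2]
  by_cases h : S = ∅
  · simp [h]
  · obtain ⟨i, hi⟩ := Finset.nonempty_iff_ne_empty.2 h
    rw [if_neg h]
    exact Finset.prod_eq_zero (Finset.mem_univ i) (by simp [hi])

lemma w_mul_w (S T : Finset (Fin n)) (ε : Fin n → Bool) :
    w S ε * w T ε = w (symmDiff S T) ε := by
  classical
  have hS : S = (S \ T) ∪ (S ∩ T) := by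
    ext x; simp [Finset.mem_sdiff, Finset.mem_inter]; tauto
  have hT : T = (T \ S) ∪ (S ∩ T) := by
    ext x; simp [Finset.mem_sdiff, Finset.mem_inter]; tauto
  have hdS : Disjoint (S \ T) (S ∩ T) := by
    rw [Finset.disjoint_left]; intro x hx hx'; simp at hx hx'; tauto
  have hdT : Disjoint (T \ S) (S ∩ T) := by
    rw [Finset.disjoint_left]; intro x hx hx'; simp at hx hx'; tauto
  have hd : Disjoint (S \ T) (T \ S) := by
    rw [Finset.disjoint_left]; intro x hx hx'; simp at hx hx'; tauto
  have hsymm : symmDiff S T = (S \ T) ∪ (T \ S) := by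
    ext x; simp [Finset.mem_symmDiff, Finset.mem_sdiff, Finset.mem_union]
  have e1 : ∏ i ∈ S, sg (ε i) = (∏ i ∈ S \ T, sg (ε i)) * ∏ i ∈ S ∩ T, sg (ε i) := by
    rw [← Finset.prod_union hdS, ← hS]
  have e2 : ∏ i ∈ T, sg (ε i) = (∏ i ∈ T \ S, sg (ε i)) * ∏ i ∈ S ∩ T, sg (ε i) := by
    rw [← Finset.prod_union hdT, ← hT]
  have h1 : (∏ i ∈ S ∩ T, sg (ε i)) * ∏ i ∈ S ∩ T, sg (ε i) = 1 := by
    rw [← Finset.prod_mul_distrib]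
    exact Finset.prod_eq_one fun i _ => sg_mul_self (ε i)
  rw [w, w, w, hsymm, Finset.prod_union hd, e1, e2]
  calc ((∏ i ∈ S \ T, sg (ε i)) * ∏ i ∈ S ∩ T, sg (ε i)) *
        ((∏ i ∈ T \ S, sg (ε i)) * ∏ i ∈ S ∩ T, sg (ε i))
      = ((∏ i ∈ S \ T, sg (ε i)) * ∏ i ∈ T \ S, sg (ε i)) *
        ((∏ i ∈ S ∩ T, sg (ε i)) * ∏ i ∈ S ∩ T, sg (ε i)) := by ring
    _ = (∏ i ∈ S \ T, sg (ε i)) * ∏ i ∈ T \ S, sg (ε i) := by rw [h1, mul_one]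

lemma sum_w_mul_w (S T : Finset (Fin n)) :
    ∑ ε : Fin n → Bool, w S ε * w T ε = if S = T then (2:ℝ)^n else 0 := by
  simp_rw [w_mul_w, sum_w]
  by_cases h : S = T
  · subst h; simp [symmDiff_self]
  · rw [if_neg h, if_neg]
    intro hc
    exact h (symmDiff_eq_bot.mp hc)

lemma sum_w_apply_mul (ε ε' : Fin n → Bool) :
    ∑ S : Finset (Fin n), w S ε * w S ε' = if ε = ε' then (2:ℝ)^n else 0 := by
  have h1 : ∀ S : Finset (Fin n), w S ε * w S ε' = ∏ i ∈ S, (sg (ε i) * sg (ε' i)) := by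
    intro S; rw [w, w, ← Finset.prod_mul_distrib]
  simp_rw [h1]
  have h2 : (∑ S : Finset (Fin n), ∏ i ∈ S, (sg (ε i) * sg (ε' i)))
      = ∏ i : Fin n, (sg (ε i) * sg (ε' i) + 1) := by
    rw [Fintype.prod_add]
    exact (Finset.sum_congr rfl fun t _ => by rw [Finset.prod_const_one, mul_one]).symm
  rw [h2]
  by_cases h : ε = ε'
  · subst h
    simp_rw [sg_mul_self]
    norm_num
  · obtain ⟨i, hi⟩ : ∃ i, ε i ≠ ε' i := by
      by_contra hc; push_neg at hc; exact h (funext hc)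
    rw [if_neg h]
    refine Finset.prod_eq_zero (Finset.mem_univ i) ?_
    cases hεi : ε i <;> cases hε'i : ε' i <;> simp_all [sg]


noncomputable def ch (f : (Fin n → Bool) → ℝ) (S : Finset (Fin n)) : ℝ :=
  ∑ ε : Fin n → Bool, f ε * w S ε

lemma inversion (f : (Fin n → Bool) → ℝ) (ε : Fin n → Bool) :
    ∑ S : Finset (Fin n), ch f S * w S ε = 2^n * f ε := by
  simp_rw [ch, Finset.sum_mul]
  rw [Finset.sum_comm]
  have h1 : ∀ ε' : Fin n → Bool,
      ∑ S : Finset (Fin n), f ε' * w S ε' * w S ε = f ε' * (if ε' = ε then (2:ℝ)^n else 0) := by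
    intro ε'
    simp_rw [mul_assoc]
    rw [← Finset.mul_sum, sum_w_apply_mul]
  simp_rw [h1]
  simp [mul_comm]

lemma parseval (f : (Fin n → Bool) → ℝ) :
    (2:ℝ)^n * ∑ ε : Fin n → Bool, f ε ^ 2 = ∑ S : Finset (Fin n), ch f S ^ 2 := by
  have h1 : ∀ S : Finset (Fin n), ch f S ^ 2 = ∑ ε : Fin n → Bool, f ε * w S ε * ch f S := by
    intro S; rw [sq, ch, Finset.sum_mul]
  simp_rw [h1]
  rw [Finset.sum_comm]
  have h2 : ∀ ε : Fin n → Bool,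
      ∑ S : Finset (Fin n), f ε * w S ε * ch f S = f ε * (2^n * f ε) := by
    intro ε
    rw [← inversion f ε, Finset.mul_sum]
    exact Finset.sum_congr rfl fun S _ => by ring
  simp_rw [h2]
  rw [Finset.mul_sum]
  exact Finset.sum_congr rfl fun ε _ => by ring

noncomputable def flip (i : Fin n) (ε : Fin n → Bool) : Fin n → Bool :=
  Function.update ε i (!ε i)

lemma w_flip (S : Finset (Fin n)) (i : Fin n) (ε : Fin n → Bool) :
    w S (flip i ε) = (if i ∈ S then -1 else 1) * w S ε := by
  classical
  by_cases h : i ∈ S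
  · rw [if_pos h, w, w]
    rw [← Finset.prod_erase_mul S _ h, ← Finset.prod_erase_mul S _ h]
    have h1 : ∀ j ∈ S.erase i, sg (flip i ε j) = sg (ε j) := by
      intro j hj
      have : j ≠ i := Finset.ne_of_mem_erase hj
      rw [flip, Function.update_of_ne this]
    rw [Finset.prod_congr rfl h1]
    have h2 : sg (flip i ε i) = - sg (ε i) := by
      rw [flip, Function.update_self, sg_not]
    rw [h2]; ring
  · rw [if_neg h, one_mul, w, w]
    refine Finset.prod_congr rfl fun j hj => ?_
    have : j ≠ i := fun hji => h (hji ▸ hj)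
    rw [flip, Function.update_of_ne this]

lemma flip_invol (i : Fin n) (ε : Fin n → Bool) : flip i (flip i ε) = ε := by
  funext j
  by_cases h : j = i
  · subst h; simp [flip]
  · simp [flip, Function.update_of_ne h]

lemma sum_flip_formula (f : (Fin n → Bool) → ℝ) (i : Fin n) :
    (2:ℝ)^n * ∑ ε : Fin n → Bool, f ε * f (flip i ε)
      = ∑ S : Finset (Fin n), (if i ∈ S then -1 else 1) * ch f S ^ 2 := by
  have h1 : ∀ S : Finset (Fin n), (if i ∈ S then (-1:ℝ) else 1) * ch f S ^ 2
      = ∑ ε : Fin n → Bool, f ε * (ch f S * w S (flip i ε)) := by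
    intro S
    simp_rw [w_flip]
    rw [sq, ch]
    rw [Finset.sum_mul]  -- ch f S * ch f S = ∑ ε f ε w S ε * ch f S
    rw [Finset.mul_sum]
    refine Finset.sum_congr rfl fun ε _ => by ring
  simp_rw [h1]
  rw [Finset.sum_comm]
  have h2 : ∀ ε : Fin n → Bool,
      ∑ S : Finset (Fin n), f ε * (ch f S * w S (flip i ε)) = f ε * (2^n * f (flip i ε)) := by
    intro ε
    rw [← inversion f (flip i ε), Finset.mul_sum]
  simp_rw [h2]
  rw [Finset.mul_sum]
  exact Finset.sum_congr rfl fun ε _ => by ring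

lemma ch_eq_zero_of_odd (f : (Fin n → Bool) → ℝ) (hf : ∀ ε, f (fun i => !ε i) = f ε)
    (S : Finset (Fin n)) (hS : ¬ Even S.card) : ch f S = 0 := by
  have hbij : Function.Bijective (fun ε : Fin n → Bool => fun i => !ε i) := by
    have hinv : Function.Involutive (fun ε : Fin n → Bool => fun i => !ε i) := by
      intro ε; funext i; simp
    exact hinv.bijective
  have key : ch f S = (-1)^S.card * ch f S := by
    have h1 : ∀ ε : Fin n → Bool,
        f (fun i => !ε i) * w S (fun i => !ε i) = (-1)^S.card * (f ε * w S ε) := by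
      intro ε
      rw [hf]
      have hw : w S (fun i => !ε i) = (-1)^S.card * w S ε := by
        rw [w, w]
        have : ∀ i ∈ S, sg (!ε i) = -1 * sg (ε i) := fun i _ => by rw [sg_not]; ring
        rw [Finset.prod_congr rfl this, Finset.prod_mul_distrib, Finset.prod_const]
      rw [hw]; ring
    calc ch f S = ∑ ε : Fin n → Bool, f (fun i => !ε i) * w S (fun i => !ε i) := by
          rw [ch]
          exact (Fintype.sum_bijective _ hbij _ _ fun ε => rfl).symm
      _ = ∑ ε : Fin n → Bool, (-1)^S.card * (f ε * w S ε) := Finset.sum_congr rfl fun ε _ => h1 ε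
      _ = (-1)^S.card * ch f S := by rw [← Finset.mul_sum, ch]
  have : (-1:ℝ)^S.card = -1 := Odd.neg_one_pow (Nat.not_even_iff_odd.1 hS)
  rw [this] at key
  linarith


lemma sum_singleton_sq (b : Fin n → ℝ) :
    ∑ ε : Fin n → Bool, (∑ i, sg (ε i) * b i) ^ 2 = 2^n * ∑ i, b i ^ 2 := by
  have h1 : ∀ ε : Fin n → Bool, (∑ i, sg (ε i) * b i) ^ 2
      = ∑ i, ∑ j, b i * b j * (w {i} ε * w {j} ε) := by
    intro ε
    rw [sq, Finset.sum_mul_sum]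
    refine Finset.sum_congr rfl fun i _ => Finset.sum_congr rfl fun j _ => ?_
    simp [w]; ring
  simp_rw [h1]
  rw [Finset.sum_comm]
  have h2 : ∀ i : Fin n, ∑ ε : Fin n → Bool, ∑ j, b i * b j * (w {i} ε * w {j} ε)
      = 2^n * b i ^ 2 := by
    intro i
    rw [Finset.sum_comm]
    have h3 : ∀ j : Fin n, ∑ ε : Fin n → Bool, b i * b j * (w {i} ε * w {j} ε)
        = b i * b j * (if i = j then (2:ℝ)^n else 0) := by
      intro j
      rw [← Finset.mul_sum, sum_w_mul_w]
      congr 1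
      simp [Finset.singleton_inj]
    simp_rw [h3]
    rw [Finset.sum_eq_single i]
    · simp; ring
    · intro j _ hj; simp [Ne.symm hj]
    · intro h; exact absurd (Finset.mem_univ i) h
  simp_rw [h2]
  rw [Finset.mul_sum]

lemma Sv_flip (b : Fin n → ℝ) (i : Fin n) (ε : Fin n → Bool) :
    ∑ j, sg (flip i ε j) * b j = (∑ j, sg (ε j) * b j) - 2 * sg (ε i) * b i := by
  have h1 : ∀ j : Fin n, sg (flip i ε j) * b j
      = sg (ε j) * b j + (if j = i then -2 * sg (ε i) * b i else 0) := by
    intro j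
    by_cases h : j = i
    · subst h; rw [flip, Function.update_self, sg_not, if_pos rfl]; ring
    · rw [flip, Function.update_of_ne h, if_neg h]; ring
  simp_rw [h1]
  rw [Finset.sum_add_distrib, Finset.sum_ite_eq' Finset.univ i
    (fun _ => -2 * sg (ε i) * b i)]
  simp; ring

/-- The key discrete Khintchine inequality with sharp constant `1/√2`
    (Latała–Oleszkiewicz argument). -/
lemma discrete_khintchine (b : Fin n → ℝ) :
    Real.sqrt (∑ i, b i ^ 2) / Real.sqrt 2 * 2^n
      ≤ ∑ ε : Fin n → Bool, |∑ i, sg (ε i) * b i| := by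
  classical
  set Sv : (Fin n → Bool) → ℝ := fun ε => ∑ i, sg (ε i) * b i with hSv
  set f : (Fin n → Bool) → ℝ := fun ε => |Sv ε| with hf
  set c : Finset (Fin n) → ℝ := ch f with hc
  set A : ℝ := ∑ ε : Fin n → Bool, f ε ^ 2 with hA
  set B : ℝ := ∑ ε : Fin n → Bool, f ε with hB
  -- f is even
  have heven : ∀ ε : Fin n → Bool, f (fun i => !ε i) = f ε := by
    intro ε
    have : Sv (fun i => !ε i) = - Sv ε := by
      rw [hSv, ← Finset.sum_neg_distrib]
      exact Finset.sum_congr rfl fun i _ => by rw [sg_not]; ring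
    rw [hf]; simp only [this, abs_neg]
  -- pointwise flip inequality
  have hflip : ∀ ε : Fin n → Bool, ((n : ℝ) - 2) * f ε ≤ ∑ i, f (flip i ε) := by
    intro ε
    have hsum : ∑ i, Sv (flip i ε) = ((n : ℝ) - 2) * Sv ε := by
      have : ∀ i : Fin n, Sv (flip i ε) = Sv ε - 2 * sg (ε i) * b i := fun i => Sv_flip b i ε
      simp_rw [this]
      rw [Finset.sum_sub_distrib, Finset.sum_const, Finset.card_univ, Fintype.card_fin]
      have : ∑ i, 2 * sg (ε i) * b i = 2 * Sv ε := by
        rw [hSv, Finset.mul_sum]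
        exact Finset.sum_congr rfl fun i _ => by ring
      rw [this, nsmul_eq_mul]; ring
    calc ((n : ℝ) - 2) * f ε ≤ |((n : ℝ) - 2) * Sv ε| := by
          rw [abs_mul, hf]
          exact mul_le_mul_of_nonneg_right (le_abs_self _) (abs_nonneg _)
      _ = |∑ i, Sv (flip i ε)| := by rw [hsum]
      _ ≤ ∑ i, |Sv (flip i ε)| := Finset.abs_sum_le_sum_abs _ _
      _ = ∑ i, f (flip i ε) := rfl
  -- level bound: ∑ S.card • c S ^ 2 ≤ ∑ c S ^ 2
  have hlevel : ∑ S : Finset (Fin n), (S.card : ℝ) * c S ^ 2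
      ≤ ∑ S : Finset (Fin n), c S ^ 2 := by
    have h1 : ((n : ℝ) - 2) * A ≤ ∑ i, ∑ ε : Fin n → Bool, f ε * f (flip i ε) := by
      rw [Finset.sum_comm]
      have h2 : ∀ ε : Fin n → Bool, ((n : ℝ) - 2) * f ε ^ 2 ≤ ∑ i, f ε * f (flip i ε) := by
        intro ε
        rw [← Finset.mul_sum]
        calc ((n : ℝ) - 2) * f ε ^ 2 = f ε * (((n : ℝ) - 2) * f ε) := by ring
          _ ≤ f ε * ∑ i, f (flip i ε) :=
            mul_le_mul_of_nonneg_left (hflip ε) (abs_nonneg _)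
      calc ((n : ℝ) - 2) * A = ∑ ε : Fin n → Bool, ((n : ℝ) - 2) * f ε ^ 2 := by
            rw [hA, Finset.mul_sum]
        _ ≤ _ := Finset.sum_le_sum fun ε _ => h2 ε
    have h3 : ∀ i : Fin n, (2:ℝ)^n * ∑ ε : Fin n → Bool, f ε * f (flip i ε)
        = ∑ S : Finset (Fin n), (if i ∈ S then -1 else 1) * c S ^ 2 :=
      fun i => sum_flip_formula f i
    have h4 : (2:ℝ)^n * (((n : ℝ) - 2) * A)
        ≤ ∑ S : Finset (Fin n), ((n : ℝ) - 2 * S.card) * c S ^ 2 := by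
      have h5 : (2:ℝ)^n * (((n : ℝ) - 2) * A)
          ≤ (2:ℝ)^n * ∑ i, ∑ ε : Fin n → Bool, f ε * f (flip i ε) :=
        mul_le_mul_of_nonneg_left h1 (by positivity)
      have h6 : (2:ℝ)^n * ∑ i, ∑ ε : Fin n → Bool, f ε * f (flip i ε)
          = ∑ S : Finset (Fin n), ((n : ℝ) - 2 * S.card) * c S ^ 2 := by
        rw [Finset.mul_sum]
        simp_rw [h3]
        rw [Finset.sum_comm]
        refine Finset.sum_congr rfl fun S _ => ?_
        rw [← Finset.sum_mul]
        congr 1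
        have : ∀ i : Fin n, (if i ∈ S then (-1:ℝ) else 1)
            = 1 - 2 * (if i ∈ S then (1:ℝ) else 0) := by
          intro i; by_cases h : i ∈ S <;> simp [h]; norm_num
        simp_rw [this]
        rw [Finset.sum_sub_distrib, Finset.sum_const, ← Finset.mul_sum]
        rw [Finset.sum_ite_mem, Finset.univ_inter, Finset.sum_const]
        simp [Finset.card_univ]
      linarith
    have hpars : (2:ℝ)^n * A = ∑ S : Finset (Fin n), c S ^ 2 := parseval f
    have hexp : ∑ S : Finset (Fin n), ((n : ℝ) - 2 * S.card) * c S ^ 2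
        = (n : ℝ) * ∑ S : Finset (Fin n), c S ^ 2
          - 2 * ∑ S : Finset (Fin n), (S.card : ℝ) * c S ^ 2 := by
      rw [Finset.mul_sum, Finset.mul_sum, ← Finset.sum_sub_distrib]
      exact Finset.sum_congr rfl fun S _ => by ring
    nlinarith [h4, hpars, hexp]
  -- odd coefficients vanish
  have hodd : ∀ S : Finset (Fin n), ¬ Even S.card → c S = 0 :=
    fun S hS => ch_eq_zero_of_odd f heven S hS
  -- tail bound
  have htail : ∑ S ∈ Finset.univ.erase (∅ : Finset (Fin n)), c S ^ 2 ≤ c ∅ ^ 2 := by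
    have h1 : ∀ S ∈ Finset.univ.erase (∅ : Finset (Fin n)),
        c S ^ 2 ≤ ((S.card : ℝ) - 1) * c S ^ 2 := by
      intro S hS
      by_cases hcz : c S = 0
      · simp [hcz]
      · have hev : Even S.card := by
          by_contra h; exact hcz (hodd S h)
        have hne : S ≠ ∅ := Finset.ne_of_mem_erase hS
        have hcard : 2 ≤ S.card := by
          rcases Nat.lt_or_ge S.card 2 with h | h
          · interval_cases hc : S.card
            · exact absurd (Finset.card_eq_zero.mp hc) hne
            · exact absurd hev (by simp [hc])
          · exact h
        have : (1 : ℝ) ≤ (S.card : ℝ) - 1 := by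
          have : (2 : ℝ) ≤ (S.card : ℝ) := by exact_mod_cast hcard
          linarith
        nlinarith [sq_nonneg (c S)]
    calc ∑ S ∈ Finset.univ.erase (∅ : Finset (Fin n)), c S ^ 2
        ≤ ∑ S ∈ Finset.univ.erase (∅ : Finset (Fin n)), ((S.card : ℝ) - 1) * c S ^ 2 :=
          Finset.sum_le_sum h1
      _ ≤ c ∅ ^ 2 := by
          have hsplit : ∑ S : Finset (Fin n), ((S.card : ℝ) - 1) * c S ^ 2
              = ((∅ : Finset (Fin n)).card - 1 : ℝ) * c ∅ ^ 2
                + ∑ S ∈ Finset.univ.erase (∅ : Finset (Fin n)), ((S.card : ℝ) - 1) * c S ^ 2 :=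
            (Finset.add_sum_erase Finset.univ _ (Finset.mem_univ ∅)).symm
          have hneg : ∑ S : Finset (Fin n), ((S.card : ℝ) - 1) * c S ^ 2 ≤ 0 := by
            have : ∑ S : Finset (Fin n), ((S.card : ℝ) - 1) * c S ^ 2
                = ∑ S : Finset (Fin n), (S.card : ℝ) * c S ^ 2
                  - ∑ S : Finset (Fin n), c S ^ 2 := by
              rw [← Finset.sum_sub_distrib]
              exact Finset.sum_congr rfl fun S _ => by ring
            linarith [hlevel]
          simp only [Finset.card_empty, Nat.cast_zero] at hsplit
          linarith [hsplit, hneg]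
  -- conclude A ≤ 2 B² / 2^n etc.
  have hc0 : c ∅ = B := by
    rw [hc, ch, hB]
    exact Finset.sum_congr rfl fun ε _ => by simp [w]
  have hAval : A = 2^n * ∑ i, b i ^ 2 := by
    rw [hA]
    have : ∀ ε : Fin n → Bool, f ε ^ 2 = Sv ε ^ 2 := fun ε => sq_abs _
    simp_rw [this]
    exact sum_singleton_sq b
  have hfinal : (2:ℝ)^n * A ≤ 2 * B ^ 2 := by
    have hsplit : ∑ S : Finset (Fin n), c S ^ 2
        = c ∅ ^ 2 + ∑ S ∈ Finset.univ.erase (∅ : Finset (Fin n)), c S ^ 2 :=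
      (Finset.add_sum_erase Finset.univ _ (Finset.mem_univ ∅)).symm
    have := parseval f
    rw [hc0] at hsplit htail
    nlinarith [this, hsplit, htail]
  -- extract the square root inequality
  have hBnn : 0 ≤ B := Finset.sum_nonneg fun ε _ => abs_nonneg _
  have hsq : (Real.sqrt (∑ i, b i ^ 2) / Real.sqrt 2 * 2^n) ^ 2 ≤ B ^ 2 := by
    have hbnn : (0:ℝ) ≤ ∑ i, b i ^ 2 := Finset.sum_nonneg fun i _ => sq_nonneg _
    have e1 : (Real.sqrt (∑ i, b i ^ 2) / Real.sqrt 2 * 2^n) ^ 2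
        = (∑ i, b i ^ 2) / 2 * (2^n)^2 := by
      rw [mul_pow, div_pow, Real.sq_sqrt hbnn, Real.sq_sqrt (by norm_num : (0:ℝ) ≤ 2)]
    rw [e1]
    rw [hAval] at hfinal
    nlinarith [hfinal]
  have hLnn : (0:ℝ) ≤ Real.sqrt (∑ i, b i ^ 2) / Real.sqrt 2 * 2^n := by positivity
  nlinarith [hsq, hBnn, hLnn]


end Kh

/-- Lemma (Khintchine-type sign selection): for norm-one `f_1, …, f_n ∈ L^1[0,1]`
and reals `a_1, …, a_n` there are signs `δ_k = ±1` with
`∫ |∑ δ_k a_k f_k| ≥ (1/√2)(∑ a_k²)^{1/2}`. -/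
theorem exists_signs_khintchine_lower (n : ℕ) (f : Fin n → ℝ → ℝ)
    (hf : ∀ k, Integrable (f k) mu01) (hnorm : ∀ k, ∫ t, |f k t| ∂mu01 = 1)
    (a : Fin n → ℝ) :
    ∃ δ : Fin n → ℝ, (∀ k, δ k = 1 ∨ δ k = -1) ∧
      1 / Real.sqrt 2 * Real.sqrt (∑ k, a k ^ 2) ≤
        ∫ t, |∑ k, δ k * a k * f k t| ∂mu01 := by
  classical
  set g : ℝ → ℝ := fun t => Real.sqrt (∑ i, (a i * f i t) ^ 2) with hg
  have hgnn : ∀ t, 0 ≤ g t := fun t => Real.sqrt_nonneg _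
  have hSint : ∀ ε : Fin n → Bool,
      Integrable (fun t => ∑ i, Kh.sg (ε i) * a i * f i t) mu01 := by
    intro ε
    apply integrable_finset_sum
    intro i _
    simpa [mul_assoc] using (hf i).const_mul (Kh.sg (ε i) * a i)
  have habs : ∀ ε : Fin n → Bool,
      Integrable (fun t => |∑ i, Kh.sg (ε i) * a i * f i t|) mu01 := fun ε => (hSint ε).abs
  have hgm : AEStronglyMeasurable g mu01 := by
    apply Real.continuous_sqrt.comp_aestronglyMeasurable
    apply Finset.aestronglyMeasurable_fun_sum
    intro i _
    have h1 : AEStronglyMeasurable (fun t => a i * f i t) mu01 := (hf i).1.const_mul (a i)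
    have : (fun t => (a i * f i t) ^ 2) = fun t => (a i * f i t) * (a i * f i t) := by
      funext t; ring
    rw [this]
    exact h1.mul h1
  have hgint : Integrable g mu01 := by
    have hbd : Integrable (fun t => ∑ i : Fin n, |a i * f i t|) mu01 :=
      integrable_finset_sum _ (fun i _ => ((hf i).const_mul (a i)).abs)
    refine Integrable.mono' hbd hgm ?_
    filter_upwards with t
    rw [Real.norm_eq_abs, abs_of_nonneg (hgnn t)]
    have h1 : ∑ i, (a i * f i t) ^ 2 ≤ (∑ i, |a i * f i t|) ^ 2 := by
      have h2 : ∀ i : Fin n, (a i * f i t) ^ 2 ≤ |a i * f i t| * ∑ j, |a j * f j t| := by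
        intro i
        have h3 : |a i * f i t| ≤ ∑ j, |a j * f j t| :=
          Finset.single_le_sum (f := fun j => |a j * f j t|)
            (fun j _ => abs_nonneg _) (Finset.mem_univ i)
        calc (a i * f i t) ^ 2 = |a i * f i t| * |a i * f i t| := by
              rw [← sq_abs]; ring
          _ ≤ |a i * f i t| * ∑ j, |a j * f j t| :=
              mul_le_mul_of_nonneg_left h3 (abs_nonneg _)
      calc ∑ i, (a i * f i t) ^ 2 ≤ ∑ i, |a i * f i t| * ∑ j, |a j * f j t| :=
            Finset.sum_le_sum fun i _ => h2 i
        _ = (∑ i, |a i * f i t|) ^ 2 := by rw [← Finset.sum_mul, sq]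
    calc g t ≤ Real.sqrt ((∑ i, |a i * f i t|) ^ 2) := Real.sqrt_le_sqrt h1
      _ = ∑ i, |a i * f i t| :=
          Real.sqrt_sq (Finset.sum_nonneg fun i _ => abs_nonneg _)
  -- Minkowski-type lower bound for ∫ g
  have hmink : Real.sqrt (∑ k, a k ^ 2) ≤ ∫ t, g t ∂mu01 := by
    set s : ℝ := ∑ k, a k ^ 2 with hs
    have hsnn : 0 ≤ s := Finset.sum_nonneg fun i _ => sq_nonneg _
    rcases eq_or_lt_of_le hsnn with hz | hpos
    · rw [← hz, Real.sqrt_zero]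
      exact integral_nonneg hgnn
    · have hCS : ∀ t, ∑ i, a i ^ 2 * |f i t| ≤ Real.sqrt s * g t := by
        intro t
        calc ∑ i, a i ^ 2 * |f i t| = ∑ i, |a i| * |a i * f i t| := by
              refine Finset.sum_congr rfl fun i _ => ?_
              rw [abs_mul, ← sq_abs (a i), sq]; ring
          _ ≤ Real.sqrt (∑ i, |a i| ^ 2) * Real.sqrt (∑ i, |a i * f i t| ^ 2) :=
              Real.sum_mul_le_sqrt_mul_sqrt _ _ _
          _ = Real.sqrt s * g t := by simp_rw [sq_abs]; rfl
      have h1 : s = ∫ t, ∑ i, a i ^ 2 * |f i t| ∂mu01 := by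
        rw [integral_finset_sum _ (fun i _ => ((hf i).abs.const_mul (a i ^ 2)))]
        have : ∀ i : Fin n, ∫ t, a i ^ 2 * |f i t| ∂mu01 = a i ^ 2 := by
          intro i
          rw [integral_const_mul, hnorm i, mul_one]
        simp_rw [this]
        rfl
      have h2 : ∫ t, ∑ i, a i ^ 2 * |f i t| ∂mu01 ≤ Real.sqrt s * ∫ t, g t ∂mu01 := by
        rw [← integral_const_mul]
        refine integral_mono (integrable_finset_sum _
          (fun i _ => ((hf i).abs.const_mul (a i ^ 2)))) (hgint.const_mul _) ?_
        exact hCS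
      have h3 : Real.sqrt s * Real.sqrt s ≤ Real.sqrt s * ∫ t, g t ∂mu01 := by
        rw [Real.mul_self_sqrt hsnn]
        linarith [h1, h2]
      exact le_of_mul_le_mul_left h3 (Real.sqrt_pos.2 hpos)
  -- averaging over signs
  have hsum : (2:ℝ)^n * (1 / Real.sqrt 2 * Real.sqrt (∑ k, a k ^ 2))
      ≤ ∑ ε : Fin n → Bool, ∫ t, |∑ i, Kh.sg (ε i) * a i * f i t| ∂mu01 := by
    rw [← integral_finset_sum _ (fun ε _ => habs ε)]
    have hpt : ∀ t, 2^n / Real.sqrt 2 * g t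
        ≤ ∑ ε : Fin n → Bool, |∑ i, Kh.sg (ε i) * a i * f i t| := by
      intro t
      have h0 := Kh.discrete_khintchine (fun i => a i * f i t)
      have he : ∀ ε : Fin n → Bool,
          (∑ i, Kh.sg (ε i) * (a i * f i t)) = ∑ i, Kh.sg (ε i) * a i * f i t :=
        fun ε => Finset.sum_congr rfl fun i _ => by ring
      simp_rw [he] at h0
      calc 2^n / Real.sqrt 2 * g t = g t / Real.sqrt 2 * 2^n := by ring
        _ ≤ _ := h0
    calc (2:ℝ)^n * (1 / Real.sqrt 2 * Real.sqrt (∑ k, a k ^ 2))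
        = 2^n / Real.sqrt 2 * Real.sqrt (∑ k, a k ^ 2) := by ring
      _ ≤ 2^n / Real.sqrt 2 * ∫ t, g t ∂mu01 :=
          mul_le_mul_of_nonneg_left hmink (by positivity)
      _ = ∫ t, 2^n / Real.sqrt 2 * g t ∂mu01 := (integral_const_mul _ _).symm
      _ ≤ ∫ t, ∑ ε : Fin n → Bool, |∑ i, Kh.sg (ε i) * a i * f i t| ∂mu01 := by
          refine integral_mono (hgint.const_mul _)
            (integrable_finset_sum _ (fun ε _ => habs ε)) ?_
          exact hpt
  -- extract a good sign pattern
  have hex : ∃ ε : Fin n → Bool,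
      1 / Real.sqrt 2 * Real.sqrt (∑ k, a k ^ 2)
        ≤ ∫ t, |∑ i, Kh.sg (ε i) * a i * f i t| ∂mu01 := by
    by_contra hcon
    push_neg at hcon
    have hlt : ∑ ε : Fin n → Bool, ∫ t, |∑ i, Kh.sg (ε i) * a i * f i t| ∂mu01
        < ∑ _ε : Fin n → Bool, 1 / Real.sqrt 2 * Real.sqrt (∑ k, a k ^ 2) :=
      Finset.sum_lt_sum_of_nonempty Finset.univ_nonempty fun ε _ => hcon ε
    rw [Finset.sum_const, Finset.card_univ] at hlt
    have hcard : Fintype.card (Fin n → Bool) = 2 ^ n := by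
      rw [Fintype.card_fun]; simp
    rw [hcard, nsmul_eq_mul] at hlt
    push_cast at hlt
    linarith
  obtain ⟨ε, hε⟩ := hex
  exact ⟨fun k => Kh.sg (ε k), fun k => by cases hk : ε k <;> simp [Kh.sg, hk], hε⟩
end

section
/- Let 1 < p < q < 2 and set α = p/(p-1). There exist constants d, D > 0 such that ‖f‖_{Exp L^α} ≤ d · ‖f‖_{X_p} for every f ∈ X_p, and ‖f‖_{X_q} ≤ D · ‖f‖_{Exp L^α} for every f ∈ Exp L^α. (That is, X_p ⊂ Exp L^{p/(p-1)} ⊂ X_q as continuous inclusions.) -/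
open MeasureTheory
open scoped ENNReal

/-! ### Auxiliary lemmas -/

lemma one_le_logE {t : ℝ} (h0 : 0 < t) (h1 : t ≤ 1) : 1 ≤ Real.log (Real.exp 1 / t) := by
  rw [Real.log_div (Real.exp_ne_zero 1) h0.ne', Real.log_exp]
  have := Real.log_nonpos h0.le h1
  linarith

lemma Wp_nonneg (p : ℝ) {t : ℝ} (h0 : 0 ≤ t) (h1 : t ≤ 1) : 0 ≤ Wp p t := by
  rcases eq_or_lt_of_le h0 with h | h
  · simp [Wp, ← h]
  · rw [Wp, if_neg h.ne']
    exact Real.rpow_nonneg (by linarith [one_le_logE h h1]) _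

lemma Wp_mono (p : ℝ) (hp : 1 < p) {a b : ℝ} (ha : 0 ≤ a) (hab : a ≤ b) (hb : b ≤ 1) :
    Wp p a ≤ Wp p b := by
  rcases eq_or_lt_of_le ha with h | h
  · rw [Wp, if_pos h.symm]
    exact Wp_nonneg p (ha.trans hab) hb
  · have hb0 : 0 < b := lt_of_lt_of_le h hab
    rw [Wp, Wp, if_neg h.ne', if_neg hb0.ne']
    apply Real.rpow_le_rpow_of_nonpos
    · linarith [one_le_logE hb0 hb]
    · apply Real.log_le_log (by positivity)
      exact div_le_div_of_nonneg_left (Real.exp_pos 1).le h hab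
    · linarith

lemma Wp_one (p : ℝ) : Wp p 1 = 1 := by
  simp [Wp, Real.log_exp]

lemma Wp_le_one (p : ℝ) (hp : 1 < p) {t : ℝ} (h0 : 0 ≤ t) (h1 : t ≤ 1) : Wp p t ≤ 1 := by
  simpa [Wp_one] using Wp_mono p hp h0 h1 le_rfl

lemma XpNorm_rpow (p : ℝ) (hp : 0 < p) (f : ℝ → ℝ) :
    (XpNorm p f) ^ p = ∫⁻ lam in Set.Ioi (0 : ℝ),
      ENNReal.ofReal
        (Wp p (volume {s : ℝ | s ∈ Set.Icc (0 : ℝ) 1 ∧ lam < |f s| ^ p}).toReal) := by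
  rw [XpNorm, ← ENNReal.rpow_mul, one_div_mul_cancel hp.ne', ENNReal.rpow_one]

lemma meas_set_ne_top (f : ℝ → ℝ) (p lam : ℝ) :
    volume {s : ℝ | s ∈ Set.Icc (0 : ℝ) 1 ∧ lam < |f s| ^ p} ≠ ⊤ := by
  apply ne_top_of_le_ne_top _ (measure_mono (fun x hx => hx.1))
  simp [Real.volume_Icc]

lemma meas_set_toReal_le_one (f : ℝ → ℝ) (p lam : ℝ) :
    (volume {s : ℝ | s ∈ Set.Icc (0 : ℝ) 1 ∧ lam < |f s| ^ p}).toReal ≤ 1 := by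
  have h := measure_mono (μ := volume)
    (fun x (hx : x ∈ {s : ℝ | s ∈ Set.Icc (0 : ℝ) 1 ∧ lam < |f s| ^ p}) => hx.1)
  have hv : volume (Set.Icc (0:ℝ) 1) = 1 := by simp [Real.volume_Icc]
  calc (volume {s : ℝ | s ∈ Set.Icc (0 : ℝ) 1 ∧ lam < |f s| ^ p}).toReal
      ≤ (volume (Set.Icc (0:ℝ) 1)).toReal := ENNReal.toReal_mono (by simp [hv]) h
    _ = 1 := by simp [hv]

/-- Chebyshev-type lower bound for the `X_p` norm. -/
lemma XpNorm_chebyshev (p : ℝ) (hp : 1 < p) (f : ℝ → ℝ) {lam : ℝ} (hlam : 0 < lam) :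
    ENNReal.ofReal
        (Wp p (volume {s : ℝ | s ∈ Set.Icc (0 : ℝ) 1 ∧ lam < |f s| ^ p}).toReal)
      * ENNReal.ofReal lam ≤ (XpNorm p f) ^ p := by
  rw [XpNorm_rpow p (by linarith) f]
  set m : ℝ → ℝ := fun t => (volume {s : ℝ | s ∈ Set.Icc (0 : ℝ) 1 ∧ t < |f s| ^ p}).toReal with hm
  have key : ∀ t ∈ Set.Ioc (0:ℝ) lam,
      ENNReal.ofReal (Wp p (m lam)) ≤ ENNReal.ofReal (Wp p (m t)) := by
    intro t ht
    apply ENNReal.ofReal_le_ofReal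
    apply Wp_mono p hp ENNReal.toReal_nonneg _ (meas_set_toReal_le_one f p t)
    apply ENNReal.toReal_mono (meas_set_ne_top f p t)
    apply measure_mono
    intro x hx
    exact ⟨hx.1, lt_of_le_of_lt ht.2 hx.2⟩
  calc ENNReal.ofReal (Wp p (m lam)) * ENNReal.ofReal lam
      = ∫⁻ _ in Set.Ioc (0:ℝ) lam, ENNReal.ofReal (Wp p (m lam)) := by
        rw [setLIntegral_const, Real.volume_Ioc, sub_zero]
    _ ≤ ∫⁻ t in Set.Ioc (0:ℝ) lam, ENNReal.ofReal (Wp p (m t)) :=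
        setLIntegral_mono' measurableSet_Ioc key
    _ ≤ ∫⁻ t in Set.Ioi (0:ℝ), ENNReal.ofReal (Wp p (m t)) :=
        lintegral_mono_set Set.Ioc_subset_Ioi_self

lemma lintegral_Ioi_rpow_neg {c γ : ℝ} (hc : 0 < c) (hγ : 1 < γ) :
    ∫⁻ x in Set.Ioi c, ENNReal.ofReal (x ^ (-γ)) = ENNReal.ofReal (c ^ (1 - γ) / (γ - 1)) := by
  rw [← ofReal_integral_eq_lintegral_ofReal (integrableOn_Ioi_rpow_of_lt (by linarith) hc)
      ((ae_restrict_iff' measurableSet_Ioi).2 (ae_of_all _ fun x hx =>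
        Real.rpow_nonneg (le_of_lt (hc.trans hx)) _))]
  rw [integral_Ioi_rpow_of_lt (by linarith) hc]
  congr 1
  have h : (-γ + 1 : ℝ) = 1 - γ := by ring
  rw [h, neg_div, ← div_neg, neg_sub]

lemma lintegral_Ioi_one_add_rpow_neg {γ : ℝ} (hγ : 1 < γ) :
    ∫⁻ s in Set.Ioi (0:ℝ), ENNReal.ofReal ((1 + s) ^ (-γ)) = ENNReal.ofReal (1 / (γ - 1)) := by
  have h1 : ∫⁻ s in Set.Ioi (0:ℝ), ENNReal.ofReal ((1 + s) ^ (-γ))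
      = ∫⁻ s, (Set.Ioi (1:ℝ)).indicator (fun u => ENNReal.ofReal (u ^ (-γ))) (s + 1) := by
    rw [← lintegral_indicator measurableSet_Ioi]
    congr 1; funext s
    by_cases hs : s ∈ Set.Ioi (0:ℝ)
    · rw [Set.indicator_of_mem hs, Set.indicator_of_mem (by simp at hs ⊢; linarith)]
      rw [add_comm]
    · rw [Set.indicator_of_notMem hs, Set.indicator_of_notMem (by simp at hs ⊢; linarith)]
  rw [h1, lintegral_add_right_eq_self, lintegral_indicator measurableSet_Ioi,
      lintegral_Ioi_rpow_neg one_pos hγ, Real.one_rpow]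

set_option maxHeartbeats 1000000 in
/-- Claim: for `1 < p < q < 2` and `α = p/(p-1)`, one has the continuous
inclusions `X_p ⊂ Exp L^α ⊂ X_q`. -/
theorem Xp_subset_expL_subset_Xq (p q : ℝ) (hp : 1 < p) (hpq : p < q) (hq : q < 2) :
    ∃ d D : ℝ, 0 < d ∧ 0 < D ∧
      (∀ f : ℝ → ℝ, Measurable f →
        expLNorm (p / (p - 1)) f ≤ ENNReal.ofReal d * XpNorm p f) ∧
      (∀ f : ℝ → ℝ, Measurable f →
        XpNorm q f ≤ ENNReal.ofReal D * expLNorm (p / (p - 1)) f) := by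
  have hp1 : (0:ℝ) < p - 1 := by linarith
  have hp0 : (0:ℝ) < p := by linarith
  have hq0 : (0:ℝ) < q := by linarith
  have hq1 : (1:ℝ) < q := by linarith
  set α : ℝ := p / (p - 1) with hα
  have hα0 : 0 < α := by positivity
  have hinvα : 1/α * p = p - 1 := by rw [hα]; field_simp
  set c : ℝ := (Real.exp 1 + 2) ^ (1/α) with hcdef
  have he2 : (0:ℝ) < Real.exp 1 + 2 := by positivity
  have hc0 : 0 < c := Real.rpow_pos_of_pos he2 _
  have hcα : c ^ α = Real.exp 1 + 2 := by
    rw [hcdef, ← Real.rpow_mul he2.le, one_div_mul_cancel hα0.ne', Real.rpow_one]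
  set γ₂ : ℝ := α * (q - 1) / q with hγ₂def
  have hγ₂1 : 1 < γ₂ := by
    rw [hγ₂def, lt_div_iff₀ hq0, one_mul, hα, div_mul_eq_mul_div, lt_div_iff₀ hp1]
    nlinarith
  have hγq : 0 < γ₂ - 1 := by linarith
  set K : ℝ := 1 + 1 / (γ₂ - 1) with hKdef
  have hK0 : 0 < K := by positivity
  set D : ℝ := K ^ (1/q) with hDdef
  have hD0 : 0 < D := Real.rpow_pos_of_pos hK0 _
  have hexp1 : ∀ x : ℝ, 0 ≤ x → 1 ≤ Real.exp x := fun x hx => Real.one_le_exp hx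
  refine ⟨c, D, hc0, hD0, ?_, ?_⟩
  · -- DIRECTION 1
    intro f hf
    have gmeas : ∀ lam : ℝ, Measurable (fun t => Real.exp ((|f t| / lam) ^ α) - 1) :=
      fun lam => (((hf.abs.div_const lam).pow measurable_const).exp).sub measurable_const
    by_cases hNtop : XpNorm p f = ⊤
    · rw [hNtop, ENNReal.mul_top ((ENNReal.ofReal_pos.2 hc0).ne')]
      exact le_top
    set Nr : ℝ := (XpNorm p f).toReal with hNrdef
    have hNofReal : ENNReal.ofReal Nr = XpNorm p f := ENNReal.ofReal_toReal hNtop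
    by_cases hN0 : XpNorm p f = 0
    · -- the norm is zero: f vanishes a.e. on [0,1]
      have hmz : ∀ lam : ℝ, 0 < lam →
          volume {s : ℝ | s ∈ Set.Icc (0:ℝ) 1 ∧ lam < |f s| ^ p} = 0 := by
        intro lam hlam
        have hA := XpNorm_chebyshev p hp f hlam
        rw [hN0, ENNReal.zero_rpow_of_pos hp0] at hA
        have hprod : ENNReal.ofReal
            (Wp p (volume {s : ℝ | s ∈ Set.Icc (0:ℝ) 1 ∧ lam < |f s| ^ p}).toReal) = 0 := by
          have := le_antisymm hA zero_le
          rcases mul_eq_zero.1 this with h | h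
          · exact h
          · exact absurd h (by simp [ENNReal.ofReal_eq_zero, not_le, hlam])
        set m : ℝ := (volume {s : ℝ | s ∈ Set.Icc (0:ℝ) 1 ∧ lam < |f s| ^ p}).toReal with hmdef
        have hWm : Wp p m ≤ 0 := by
          rw [ENNReal.ofReal_eq_zero] at hprod; exact hprod
        have hm0 : m = 0 := by
          by_contra hcon
          have hmpos : 0 < m := lt_of_le_of_ne ENNReal.toReal_nonneg (Ne.symm hcon)
          have hm1 : m ≤ 1 := meas_set_toReal_le_one f p lam
          have : 0 < Wp p m := by
            rw [Wp, if_neg hcon]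
            exact Real.rpow_pos_of_pos (by linarith [one_le_logE hmpos hm1]) _
          linarith
        rcases (ENNReal.toReal_eq_zero_iff _).1 hm0 with h | h
        · exact h
        · exact absurd h (meas_set_ne_top f p lam)
      have hfz : (fun t => f t) =ᵐ[mu01] 0 := by
        rw [Filter.EventuallyEq, ae_iff]
        rw [mu01, Measure.restrict_apply' measurableSet_Icc]
        refine measure_mono_null
          (t := ⋃ n : ℕ, {s : ℝ | s ∈ Set.Icc (0:ℝ) 1 ∧ 1/((n:ℝ)+1) < |f s| ^ p})
          ?_ (measure_iUnion_null fun n => hmz _ (by positivity))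
        intro x hx
        obtain ⟨hfx, hIcc⟩ := hx
        have hfx' : f x ≠ 0 := hfx
        have h1 : 0 < |f x| ^ p := Real.rpow_pos_of_pos (abs_pos.2 hfx') p
        obtain ⟨n, hn⟩ := exists_nat_one_div_lt h1
        exact Set.mem_iUnion.2 ⟨n, hIcc, by exact_mod_cast hn⟩
      have hle : ∀ lam : ℝ, 0 < lam → expLNorm α f ≤ ENNReal.ofReal lam := by
        intro lam hlam
        have hint : ∫⁻ t, ENNReal.ofReal (Real.exp ((|f t| / lam) ^ α) - 1) ∂mu01 ≤ 1 := by
          have hz : (fun t => ENNReal.ofReal (Real.exp ((|f t| / lam) ^ α) - 1))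
              =ᵐ[mu01] (fun _ => 0) := by
            filter_upwards [hfz] with t ht
            simp only [Pi.zero_apply] at ht
            simp [ht, abs_zero, zero_div, Real.zero_rpow hα0.ne', Real.exp_zero]
          rw [lintegral_congr_ae hz, lintegral_zero]
          exact zero_le_one
        exact iInf₂_le lam ⟨hlam, hint⟩
      have hzero : expLNorm α f = 0 := by
        refine le_antisymm ?_ zero_le
        refine ENNReal.le_of_forall_pos_le_add fun ε hε _ => ?_
        have := hle ε (by exact_mod_cast hε)
        simpa using this
      rw [hzero]
      exact zero_le
    -- main case: 0 < Nr < ∞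
    have hNrpos : 0 < Nr := ENNReal.toReal_pos hN0 hNtop
    set lam : ℝ := c * Nr with hlamdef
    have hlam0 : 0 < lam := by positivity
    have hint : ∫⁻ t, ENNReal.ofReal (Real.exp ((|f t| / lam) ^ α) - 1) ∂mu01 ≤ 1 := by
      have hnn : 0 ≤ᵐ[mu01] fun t => Real.exp ((|f t| / lam) ^ α) - 1 :=
        ae_of_all _ fun t => by
          have := hexp1 ((|f t| / lam) ^ α) (Real.rpow_nonneg (by positivity) _)
          simp only [Pi.zero_apply]
          linarith
      rw [lintegral_eq_lintegral_meas_lt mu01 hnn (gmeas lam).aemeasurable]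
      have hbound : ∀ s ∈ Set.Ioi (0:ℝ),
          mu01 {a : ℝ | s < Real.exp ((|f a| / lam) ^ α) - 1}
            ≤ ENNReal.ofReal (Real.exp 1 * (1 + s) ^ (-(Real.exp 1 + 2))) := by
        intro s hs
        have hs0 : (0:ℝ) < s := hs
        set L : ℝ := Real.log (1 + s) with hLdef
        have hL0 : 0 < L := Real.log_pos (by linarith)
        have hbase : 0 < lam * L ^ (1/α) := by positivity
        set lamS : ℝ := (lam * L ^ (1/α)) ^ p with hlamSdef
        have hlamS0 : 0 < lamS := Real.rpow_pos_of_pos hbase p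
        have hseteq : {a : ℝ | s < Real.exp ((|f a| / lam) ^ α) - 1} ∩ Set.Icc 0 1
            = {a : ℝ | a ∈ Set.Icc (0:ℝ) 1 ∧ lamS < |f a| ^ p} := by
          ext x
          simp only [Set.mem_inter_iff, Set.mem_setOf_eq]
          rw [and_comm]
          apply and_congr_right
          intro _
          have hLpow : (L ^ (1/α)) ^ α = L := by
            rw [← Real.rpow_mul hL0.le, one_div_mul_cancel hα0.ne', Real.rpow_one]
          have h1 : (s < Real.exp ((|f x| / lam) ^ α) - 1) ↔ L < (|f x| / lam) ^ α := by
            rw [lt_sub_iff_add_lt, add_comm s 1, hLdef,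
              Real.log_lt_iff_lt_exp (by linarith : (0:ℝ) < 1 + s)]
          have h2 : L < (|f x| / lam) ^ α ↔ L ^ (1/α) < |f x| / lam := by
            constructor
            · intro h
              by_contra hcon
              push_neg at hcon
              have := Real.rpow_le_rpow (by positivity) hcon hα0.le
              rw [hLpow] at this; linarith
            · intro h
              have := Real.rpow_lt_rpow (Real.rpow_nonneg hL0.le _) h hα0
              rwa [hLpow] at this
          have h3 : L ^ (1/α) < |f x| / lam ↔ lamS < |f x| ^ p := by
            rw [lt_div_iff₀ hlam0, mul_comm]
            constructor
            · intro h
              exact Real.rpow_lt_rpow hbase.le h hp0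
            · intro h
              by_contra hcon
              push_neg at hcon
              exact absurd (Real.rpow_le_rpow (abs_nonneg _) hcon hp0.le) (not_le.2 h)
          exact h1.trans (h2.trans h3)
        rw [mu01, Measure.restrict_apply' measurableSet_Icc, hseteq]
        rw [← ENNReal.ofReal_toReal (meas_set_ne_top f p lamS)]
        apply ENNReal.ofReal_le_ofReal
        set m : ℝ := (volume {a : ℝ | a ∈ Set.Icc (0:ℝ) 1 ∧ lamS < |f a| ^ p}).toReal with hmdef
        have hm1 : m ≤ 1 := meas_set_toReal_le_one f p lamS
        have hm0 : (0:ℝ) ≤ m := ENNReal.toReal_nonneg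
        rcases eq_or_lt_of_le hm0 with hm | hm
        · rw [← hm]; positivity
        have hA := XpNorm_chebyshev p hp f hlamS0
        rw [← hNofReal, ENNReal.ofReal_rpow_of_nonneg hNrpos.le hp0.le,
          ← ENNReal.ofReal_mul (Wp_nonneg p hm0 hm1)] at hA
        have hreal : Wp p m * lamS ≤ Nr ^ p :=
          (ENNReal.ofReal_le_ofReal_iff (by positivity)).1 hA
        set L₂ : ℝ := Real.log (Real.exp 1 / m) with hL₂def
        have hL₂1 : 1 ≤ L₂ := one_le_logE hm hm1
        have hL₂0 : 0 < L₂ := by linarith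
        rw [Wp, if_neg hm.ne'] at hreal
        have hlamSeq : lamS = lam ^ p * L ^ (p - 1) := by
          rw [hlamSdef, Real.mul_rpow hlam0.le (Real.rpow_nonneg hL0.le _),
              ← Real.rpow_mul hL0.le, hinvα]
        have hkey : (Real.exp 1 + 2) * L ≤ L₂ := by
          have hstep : lam ^ p * L ^ (p-1) / Nr ^ p ≤ L₂ ^ (p-1) := by
            rw [div_le_iff₀ (by positivity)]
            rw [show (1 - p : ℝ) = -(p-1) by ring, Real.rpow_neg hL₂0.le, hlamSeq] at hreal
            have hpow : (0:ℝ) < L₂ ^ (p-1) := Real.rpow_pos_of_pos hL₂0 _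
            calc lam ^ p * L ^ (p-1)
                = ((L₂ ^ (p-1))⁻¹ * (lam ^ p * L ^ (p-1))) * L₂ ^ (p-1) := by
                  rw [mul_comm ((L₂ ^ (p-1))⁻¹) (lam ^ p * L ^ (p-1)), mul_assoc,
                    inv_mul_cancel₀ hpow.ne', mul_one]
              _ ≤ Nr ^ p * L₂ ^ (p-1) := mul_le_mul_of_nonneg_right hreal hpow.le
              _ = L₂ ^ (p-1) * Nr ^ p := mul_comm _ _
          have hstep2 := Real.rpow_le_rpow (by positivity) hstep
            (by positivity : (0:ℝ) ≤ 1/(p-1))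
          have hRHS : (L₂ ^ (p-1)) ^ (1/(p-1)) = L₂ := by
            rw [← Real.rpow_mul hL₂0.le, mul_one_div, div_self hp1.ne', Real.rpow_one]
          have hLHS : (lam ^ p * L ^ (p-1) / Nr ^ p) ^ (1/(p-1))
              = (Real.exp 1 + 2) * L := by
            have e1 : lam ^ p * L ^ (p-1) / Nr ^ p = (lam/Nr) ^ p * L ^ (p-1) := by
              rw [Real.div_rpow hlam0.le hNrpos.le]
              ring
            rw [e1, Real.mul_rpow (by positivity) (by positivity),
              ← Real.rpow_mul (by positivity), ← Real.rpow_mul hL0.le,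
              mul_one_div, mul_one_div, div_self hp1.ne', Real.rpow_one]
            have e2 : lam / Nr = c := by
              rw [hlamdef, mul_div_assoc, div_self hNrpos.ne', mul_one]
            rw [e2, ← hα, hcα]
          rw [hRHS, hLHS] at hstep2
          exact hstep2
        have hexplog : Real.exp L₂ = Real.exp 1 / m := Real.exp_log (by positivity)
        have hmval : m = Real.exp 1 * Real.exp (-L₂) := by
          rw [Real.exp_neg, hexplog]
          field_simp
        rw [hmval]
        apply mul_le_mul_of_nonneg_left _ (Real.exp_pos 1).le
        rw [Real.rpow_def_of_pos (by linarith : (0:ℝ) < 1 + s), ← hLdef]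
        apply Real.exp_le_exp.2
        nlinarith
      calc ∫⁻ s in Set.Ioi (0:ℝ), mu01 {a : ℝ | s < Real.exp ((|f a| / lam) ^ α) - 1}
          ≤ ∫⁻ s in Set.Ioi (0:ℝ),
              ENNReal.ofReal (Real.exp 1 * (1 + s) ^ (-(Real.exp 1 + 2))) :=
            setLIntegral_mono' measurableSet_Ioi hbound
        _ = ∫⁻ s in Set.Ioi (0:ℝ),
              ENNReal.ofReal (Real.exp 1) * ENNReal.ofReal ((1 + s) ^ (-(Real.exp 1 + 2))) := by
            congr 1; funext s; rw [← ENNReal.ofReal_mul (Real.exp_pos 1).le]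
        _ = ENNReal.ofReal (Real.exp 1)
              * ∫⁻ s in Set.Ioi (0:ℝ), ENNReal.ofReal ((1 + s) ^ (-(Real.exp 1 + 2))) :=
            lintegral_const_mul' _ _ ENNReal.ofReal_ne_top
        _ = ENNReal.ofReal (Real.exp 1) * ENNReal.ofReal (1 / (Real.exp 1 + 2 - 1)) := by
            rw [lintegral_Ioi_one_add_rpow_neg (by nlinarith [Real.exp_pos 1])]
        _ ≤ 1 := by
            rw [← ENNReal.ofReal_mul (Real.exp_pos 1).le]
            apply ENNReal.ofReal_le_one.2
            rw [mul_one_div]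
            rw [div_le_one (by nlinarith [Real.exp_pos 1])]
            linarith
    calc expLNorm α f ≤ ENNReal.ofReal lam := iInf₂_le lam ⟨hlam0, hint⟩
      _ = ENNReal.ofReal c * XpNorm p f := by
          rw [hlamdef, ENNReal.ofReal_mul hc0.le, hNofReal]
  · -- DIRECTION 2
    intro f hf
    have hgm : ∀ lam : ℝ, Measurable fun t : ℝ =>
        ENNReal.ofReal (Real.exp ((|f t| / lam) ^ α) - 1) :=
      fun lam => ((((hf.abs.div_const lam).pow measurable_const).exp).sub
        measurable_const).ennreal_ofReal
    have key : ∀ lam : ℝ, (0 < lam ∧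
        ∫⁻ t, ENNReal.ofReal (Real.exp ((|f t| / lam) ^ α) - 1) ∂mu01 ≤ 1) →
        XpNorm q f ≤ ENNReal.ofReal D * ENNReal.ofReal lam := by
      rintro lam ⟨hlam, hint⟩
      set cq : ℝ := lam ^ q with hcqdef
      have hcq0 : 0 < cq := Real.rpow_pos_of_pos hlam q
      have hcqr : cq ^ (1/q) = lam := by
        rw [hcqdef, ← Real.rpow_mul hlam.le, mul_one_div, div_self hq0.ne', Real.rpow_one]
      have htail : ∀ x ∈ Set.Ioi cq,
          ENNReal.ofReal
              (Wp q (volume {s : ℝ | s ∈ Set.Icc (0:ℝ) 1 ∧ x < |f s| ^ q}).toReal)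
            ≤ ENNReal.ofReal (cq ^ γ₂ * x ^ (-γ₂)) := by
        intro x hx
        have hxq : cq < x := hx
        have hx0 : 0 < x := hcq0.trans hxq
        set u : ℝ := (x / cq) ^ (α / q) with hudef
        have hxc1 : 1 < x / cq := (one_lt_div hcq0).2 hxq
        have hu1 : 1 < u :=
          (Real.one_lt_rpow_iff_of_pos (by positivity)).2 (Or.inl ⟨hxc1, by positivity⟩)
        have hu0 : 0 < u := by linarith
        have hupos : (0:ℝ) < Real.exp u - 1 := by
          have := Real.one_lt_exp_iff.2 hu0
          linarith
        -- the distribution set is contained in a superlevel set of the Orlicz integrand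
        have hsub : {a : ℝ | x < |f a| ^ q} ⊆
            {a : ℝ | ENNReal.ofReal (Real.exp u - 1)
              ≤ ENNReal.ofReal (Real.exp ((|f a| / lam) ^ α) - 1)} := by
          intro a ha
          have h1 : x < |f a| ^ q := ha
          have h2 : x ^ (1/q) < |f a| := by
            have h2' := Real.rpow_lt_rpow hx0.le h1 (by positivity : (0:ℝ) < 1/q)
            rwa [← Real.rpow_mul (abs_nonneg _), mul_one_div, div_self hq0.ne',
              Real.rpow_one] at h2'
          have h4 : (x ^ (1/q) / lam) ^ α = u := by
            rw [← hcqr, ← Real.div_rpow hx0.le hcq0.le,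
              ← Real.rpow_mul (by positivity : (0:ℝ) ≤ x / cq), one_div_mul_eq_div]
          have hub : u < (|f a| / lam) ^ α := by
            rw [← h4]
            apply Real.rpow_lt_rpow (by positivity) _ hα0
            exact (div_lt_div_iff_of_pos_right hlam).2 h2
          have : Real.exp u - 1 ≤ Real.exp ((|f a| / lam) ^ α) - 1 := by
            have := Real.exp_le_exp.2 hub.le
            linarith
          exact ENNReal.ofReal_le_ofReal this
        have hcheb := mul_meas_ge_le_lintegral₀ (μ := mu01) (hgm lam).aemeasurable
          (ENNReal.ofReal (Real.exp u - 1))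
        have hmeasle : mu01 {a : ℝ | x < |f a| ^ q}
            ≤ ENNReal.ofReal ((Real.exp u - 1)⁻¹) := by
          rw [ENNReal.ofReal_inv_of_pos hupos]
          refine le_trans (measure_mono hsub) ?_
          refine ENNReal.le_inv_iff_mul_le.2 ?_
          rw [mul_comm]
          exact hcheb.trans hint
        have hrestrict : volume {s : ℝ | s ∈ Set.Icc (0:ℝ) 1 ∧ x < |f s| ^ q}
            = mu01 {a : ℝ | x < |f a| ^ q} := by
          rw [mu01, Measure.restrict_apply' measurableSet_Icc]
          congr 1
          ext a
          simp only [Set.mem_inter_iff, Set.mem_setOf_eq]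
          exact and_comm
        have hmle : (volume {s : ℝ | s ∈ Set.Icc (0:ℝ) 1 ∧ x < |f s| ^ q}).toReal
            ≤ (Real.exp u - 1)⁻¹ := by
          apply ENNReal.toReal_le_of_le_ofReal (by positivity)
          rw [hrestrict]
          exact hmeasle
        have hexpu : (Real.exp u - 1)⁻¹ ≤ Real.exp (1 - u) := by
          have h7 : Real.exp (u - 1) ≤ Real.exp u - 1 := by
            have e1 : Real.exp (u-1) * Real.exp 1 = Real.exp u := by
              rw [← Real.exp_add]; ring_nf
            have e2 : (2:ℝ) ≤ Real.exp 1 := by nlinarith [Real.add_one_le_exp 1]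
            have e3 : (1:ℝ) ≤ Real.exp (u-1) := by nlinarith [Real.add_one_le_exp (u-1)]
            nlinarith
          rw [show (1-u:ℝ) = -(u-1) by ring, Real.exp_neg]
          exact inv_anti₀ (Real.exp_pos _) h7
        have hmle2 : (volume {s : ℝ | s ∈ Set.Icc (0:ℝ) 1 ∧ x < |f s| ^ q}).toReal
            ≤ Real.exp (1 - u) := hmle.trans hexpu
        have hexp1u : Real.exp (1-u) ≤ 1 := Real.exp_le_one_iff.2 (by linarith)
        have hWexp : Wp q (Real.exp (1-u)) = u ^ (1-q) := by
          rw [Wp, if_neg (Real.exp_ne_zero _)]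
          congr 1
          rw [← Real.exp_sub, show (1 - (1-u) : ℝ) = u by ring, Real.log_exp]
        have hWle : Wp q (volume {s : ℝ | s ∈ Set.Icc (0:ℝ) 1 ∧ x < |f s| ^ q}).toReal
            ≤ u ^ (1-q) := by
          rw [← hWexp]
          exact Wp_mono q hq1 ENNReal.toReal_nonneg hmle2 hexp1u
        have huval : u ^ (1 - q) = cq ^ γ₂ * x ^ (-γ₂) := by
          rw [hudef, ← Real.rpow_mul (by positivity : (0:ℝ) ≤ x/cq),
            show α / q * (1 - q) = -γ₂ by rw [hγ₂def]; ring,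
            Real.rpow_neg (by positivity : (0:ℝ) ≤ x/cq), Real.div_rpow hx0.le hcq0.le,
            inv_div, Real.rpow_neg hx0.le, div_eq_mul_inv]
        exact ENNReal.ofReal_le_ofReal (le_of_le_of_eq (hWle.trans_eq huval) rfl)
      have hI : (XpNorm q f) ^ q ≤ ENNReal.ofReal (cq * K) := by
        rw [XpNorm_rpow q hq0 f]
        rw [← Set.Ioc_union_Ioi_eq_Ioi hcq0.le,
          lintegral_union measurableSet_Ioi (Set.Ioc_disjoint_Ioi le_rfl)]
        have h1 : ∫⁻ x in Set.Ioc (0:ℝ) cq,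
            ENNReal.ofReal
              (Wp q (volume {s : ℝ | s ∈ Set.Icc (0:ℝ) 1 ∧ x < |f s| ^ q}).toReal)
            ≤ ENNReal.ofReal cq := by
          calc ∫⁻ x in Set.Ioc (0:ℝ) cq,
              ENNReal.ofReal
                (Wp q (volume {s : ℝ | s ∈ Set.Icc (0:ℝ) 1 ∧ x < |f s| ^ q}).toReal)
              ≤ ∫⁻ _ in Set.Ioc (0:ℝ) cq, 1 :=
              setLIntegral_mono' measurableSet_Ioc fun x _ =>
                ENNReal.ofReal_le_one.2
                  (Wp_le_one q hq1 ENNReal.toReal_nonneg (meas_set_toReal_le_one f q x))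
            _ = volume (Set.Ioc (0:ℝ) cq) := setLIntegral_one _
            _ = ENNReal.ofReal cq := by rw [Real.volume_Ioc, sub_zero]
        have h2 : ∫⁻ x in Set.Ioi cq,
            ENNReal.ofReal
              (Wp q (volume {s : ℝ | s ∈ Set.Icc (0:ℝ) 1 ∧ x < |f s| ^ q}).toReal)
            ≤ ENNReal.ofReal (cq / (γ₂ - 1)) := by
          calc ∫⁻ x in Set.Ioi cq,
              ENNReal.ofReal
                (Wp q (volume {s : ℝ | s ∈ Set.Icc (0:ℝ) 1 ∧ x < |f s| ^ q}).toReal)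
              ≤ ∫⁻ x in Set.Ioi cq, ENNReal.ofReal (cq ^ γ₂ * x ^ (-γ₂)) :=
              setLIntegral_mono' measurableSet_Ioi htail
            _ = ∫⁻ x in Set.Ioi cq,
                ENNReal.ofReal (cq ^ γ₂) * ENNReal.ofReal (x ^ (-γ₂)) := by
                congr 1; funext x
                rw [← ENNReal.ofReal_mul (Real.rpow_nonneg hcq0.le _)]
            _ = ENNReal.ofReal (cq ^ γ₂)
                * ∫⁻ x in Set.Ioi cq, ENNReal.ofReal (x ^ (-γ₂)) :=
              lintegral_const_mul' _ _ ENNReal.ofReal_ne_top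
            _ = ENNReal.ofReal (cq ^ γ₂) * ENNReal.ofReal (cq ^ (1 - γ₂) / (γ₂ - 1)) := by
                rw [lintegral_Ioi_rpow_neg hcq0 hγ₂1]
            _ = ENNReal.ofReal (cq / (γ₂ - 1)) := by
                rw [← ENNReal.ofReal_mul (Real.rpow_nonneg hcq0.le _)]
                congr 1
                rw [← mul_div_assoc, ← Real.rpow_add hcq0,
                  show (γ₂ + (1 - γ₂) : ℝ) = 1 by ring, Real.rpow_one]
        calc (∫⁻ x in Set.Ioc (0:ℝ) cq,
              ENNReal.ofReal
                (Wp q (volume {s : ℝ | s ∈ Set.Icc (0:ℝ) 1 ∧ x < |f s| ^ q}).toReal))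
            + ∫⁻ x in Set.Ioi cq,
              ENNReal.ofReal
                (Wp q (volume {s : ℝ | s ∈ Set.Icc (0:ℝ) 1 ∧ x < |f s| ^ q}).toReal)
            ≤ ENNReal.ofReal cq + ENNReal.ofReal (cq / (γ₂ - 1)) := add_le_add h1 h2
          _ = ENNReal.ofReal (cq * K) := by
              rw [← ENNReal.ofReal_add hcq0.le (by positivity)]
              congr 1
              rw [hKdef, mul_add, mul_one, mul_one_div]
      have hfin := ENNReal.rpow_le_rpow hI (by positivity : (0:ℝ) ≤ 1/q)
      rw [← ENNReal.rpow_mul, mul_one_div, div_self hq0.ne', ENNReal.rpow_one] at hfin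
      rw [ENNReal.ofReal_rpow_of_nonneg (by positivity) (by positivity : (0:ℝ) ≤ 1/q)] at hfin
      have hfin2 : XpNorm q f ≤ ENNReal.ofReal D * ENNReal.ofReal lam := by
        refine hfin.trans (le_of_eq ?_)
        rw [Real.mul_rpow hcq0.le hK0.le, hcqr, ← hDdef,
          ENNReal.ofReal_mul hlam.le, mul_comm]
      exact hfin2
    have hDne : ENNReal.ofReal D ≠ 0 := (ENNReal.ofReal_pos.2 hD0).ne'
    have hdiv : XpNorm q f / ENNReal.ofReal D ≤ expLNorm α f := by
      refine le_iInf fun lam => le_iInf fun hcond => ?_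
      rw [ENNReal.div_le_iff hDne ENNReal.ofReal_ne_top, mul_comm]
      exact key lam hcond
    have := (ENNReal.div_le_iff hDne ENNReal.ofReal_ne_top).1 hdiv
    rwa [mul_comm] at this
end

section
/- For every n ∈ ℕ, all real numbers a_1, …, a_n, and every τ with 0 < τ ≤ 2^{-n}, one has K(τ, Σ_{k=1}^n a_k r_k; L^1, L^∞) = τ · Σ_{k=1}^n |a_k|, where r_k are the Rademacher functions. Equivalently, ∫_0^τ (Σ_{k=1}^n a_k r_k)^*(t) dt = τ Σ_{k=1}^n |a_k| for 0 < τ ≤ 2^{-n}. -/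
open MeasureTheory
open scoped ENNReal

lemma sin_pi_mul_pos (m : ℕ) {x : ℝ} (h1 : 2*(m:ℝ) < x) (h2 : x < 2*m+1) :
    0 < Real.sin (Real.pi * x) := by
  have e : Real.pi * x = Real.pi * (x - 2*m) + (m : ℤ) * (2 * Real.pi) := by
    push_cast; ring
  rw [e, Real.sin_add_int_mul_two_pi]
  apply Real.sin_pos_of_pos_of_lt_pi
  · nlinarith [Real.pi_pos]
  · nlinarith [Real.pi_pos]

lemma sin_pi_mul_neg (m : ℕ) {x : ℝ} (h1 : 2*(m:ℝ)+1 < x) (h2 : x < 2*m+2) :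
    Real.sin (Real.pi * x) < 0 := by
  have e : Real.pi * x = Real.pi * (x - 2*m - 1) + Real.pi + (m : ℤ) * (2 * Real.pi) := by
    push_cast; ring
  rw [e, Real.sin_add_int_mul_two_pi, Real.sin_add_pi]
  have : 0 < Real.sin (Real.pi * (x - 2*m - 1)) := by
    apply Real.sin_pos_of_pos_of_lt_pi
    · nlinarith [Real.pi_pos]
    · nlinarith [Real.pi_pos]
  linarith

lemma rad_interval : ∀ (n : ℕ) (ε : Fin n → ℝ), (∀ k, ε k = 1 ∨ ε k = -1) →
    ∃ m : ℕ, m + 1 ≤ 2 ^ n ∧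
      ∀ t ∈ Set.Ioo ((m : ℝ) / 2 ^ n) (((m : ℝ) + 1) / 2 ^ n),
        ∀ k : Fin n, rademacher (k.1 + 1) t = ε k
  | 0, ε, _ => ⟨0, by norm_num, fun t _ k => k.elim0⟩
  | (n+1), ε, hε => by
    obtain ⟨m, hm, hI⟩ := rad_interval n (fun j => ε j.castSucc) (fun j => hε _)
    have h2n : (0:ℝ) < 2 ^ n := by positivity
    have h2n1 : (0:ℝ) < 2 ^ (n+1) := by positivity
    rcases hε (Fin.last n) with hsgn | hsgn
    · refine ⟨2*m, by omega, fun t ht k => ?_⟩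
      obtain ⟨ht1, ht2⟩ := ht
      push_cast at ht1 ht2
      have hx1 : 2*(m:ℝ) < 2^(n+1) * t := by
        rw [div_lt_iff₀ h2n1] at ht1; linarith
      have hx2 : 2^(n+1) * t < 2*(m:ℝ) + 1 := by
        rw [lt_div_iff₀ h2n1] at ht2; linarith
      have hmem : t ∈ Set.Ioo ((m : ℝ) / 2 ^ n) (((m : ℝ) + 1) / 2 ^ n) := by
        constructor
        · rw [div_lt_iff₀ h2n]; rw [pow_succ] at hx1; nlinarith
        · rw [lt_div_iff₀ h2n]; rw [pow_succ] at hx2; nlinarith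
      induction k using Fin.lastCases with
      | last =>
        rw [hsgn]
        show Real.sign _ = 1
        apply Real.sign_of_pos
        simp only [Fin.val_last]
        have e2 : (2:ℝ) ^ (n+1) * Real.pi * t = Real.pi * (2^(n+1) * t) := by ring
        rw [e2]
        exact sin_pi_mul_pos m hx1 hx2
      | cast j =>
        have := hI t hmem j
        simpa using this
    · refine ⟨2*m+1, by omega, fun t ht k => ?_⟩
      obtain ⟨ht1, ht2⟩ := ht
      push_cast at ht1 ht2
      have hx1 : 2*(m:ℝ)+1 < 2^(n+1) * t := by
        rw [div_lt_iff₀ h2n1] at ht1; linarith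
      have hx2 : 2^(n+1) * t < 2*(m:ℝ) + 2 := by
        rw [lt_div_iff₀ h2n1] at ht2; linarith
      have hmem : t ∈ Set.Ioo ((m : ℝ) / 2 ^ n) (((m : ℝ) + 1) / 2 ^ n) := by
        constructor
        · rw [div_lt_iff₀ h2n]; rw [pow_succ] at hx1; nlinarith
        · rw [lt_div_iff₀ h2n]; rw [pow_succ] at hx2; nlinarith
      induction k using Fin.lastCases with
      | last =>
        rw [hsgn]
        show Real.sign _ = -1
        apply Real.sign_of_neg
        simp only [Fin.val_last]
        have e2 : (2:ℝ) ^ (n+1) * Real.pi * t = Real.pi * (2^(n+1) * t) := by ring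
        rw [e2]
        exact sin_pi_mul_neg m hx1 hx2
      | cast j =>
        have := hI t hmem j
        simpa using this

lemma abs_rademacher_le_one (k : ℕ) (t : ℝ) : |rademacher k t| ≤ 1 := by
  rcases Real.sign_apply_eq (Real.sin (2 ^ k * Real.pi * t)) with h | h | h <;>
    simp [rademacher, h]

/-- For `0 < τ ≤ 2^{-n}`, `K(τ, ∑ a_k r_k; L^1, L^∞) = τ ∑ |a_k|`. -/
theorem Kfun_rademacher_small_tau (n : ℕ) (a : Fin n → ℝ) (τ : ℝ)
    (hτ : 0 < τ) (hτ2 : τ ≤ ((2 : ℝ) ^ n)⁻¹) :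
    Kfun τ (fun t => ∑ k, a k * rademacher (k.1 + 1) t) =
      ENNReal.ofReal (τ * ∑ k, |a k|) := by
  set f : ℝ → ℝ := fun t => ∑ k, a k * rademacher (k.1 + 1) t with hfdef
  set Sab : ℝ := ∑ k, |a k| with hSabdef
  have hSab0 : 0 ≤ Sab := Finset.sum_nonneg fun k _ => abs_nonneg _
  have h2n : (0:ℝ) < 2 ^ n := by positivity
  apply le_antisymm
  · -- upper bound: take g = 0, h = f
    have hb : ∀ᵐ x ∂mu01, ‖f x‖ ≤ Sab := by
      filter_upwards with x
      calc ‖f x‖ = |∑ k, a k * rademacher (k.1 + 1) x| := rfl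
        _ ≤ ∑ k, |a k * rademacher (k.1 + 1) x| := Finset.abs_sum_le_sum_abs _ _
        _ ≤ ∑ k, |a k| := by
            refine Finset.sum_le_sum fun k _ => ?_
            rw [abs_mul]
            calc |a k| * |rademacher (k.1+1) x| ≤ |a k| * 1 :=
                mul_le_mul_of_nonneg_left (abs_rademacher_le_one _ _) (abs_nonneg _)
              _ = |a k| := mul_one _
    have step : Kfun τ f ≤ eLpNorm (0 : ℝ → ℝ) 1 mu01 + ENNReal.ofReal τ * eLpNorm f ⊤ mu01 := by
      simp only [Kfun]
      refine iInf_le_of_le 0 (iInf_le_of_le f (iInf_le_of_le ?_ le_rfl))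
      funext t; simp
    refine step.trans ?_
    rw [eLpNorm_zero, zero_add, eLpNorm_exponent_top, ENNReal.ofReal_mul hτ.le]
    exact mul_le_mul_right (eLpNormEssSup_le_of_ae_bound hb) _
  · -- lower bound
    set ε : Fin n → ℝ := fun k => if a k < 0 then -1 else 1 with hεdef
    obtain ⟨m, hm, hI⟩ :=
      rad_interval n ε (fun k => by by_cases h : a k < 0 <;> simp [hεdef, h])
    set l : ℝ := (m : ℝ) / 2 ^ n with hldef
    have hl0 : 0 ≤ l := by positivity
    have hm1 : (m : ℝ) + 1 ≤ 2 ^ n := by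
      have : ((m + 1 : ℕ) : ℝ) ≤ ((2 ^ n : ℕ) : ℝ) := Nat.cast_le.mpr hm
      push_cast at this; linarith
    have hlτ : l + τ ≤ ((m : ℝ) + 1) / 2 ^ n := by
      have hτ' : τ ≤ 1 / 2 ^ n := by rw [one_div]; exact hτ2
      have he : ((m:ℝ)+1)/2^n = l + 1/2^n := by rw [hldef]; ring
      rw [he]; linarith
    set A : Set ℝ := Set.Ioo l (l + τ) with hAdef
    have hAsub1 : A ⊆ Set.Ioo l (((m:ℝ)+1)/2^n) := Set.Ioo_subset_Ioo le_rfl hlτ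
    have hAIcc : A ⊆ Set.Icc 0 1 := by
      intro t ht
      have h1 : ((m:ℝ)+1)/2^n ≤ 1 := by rw [div_le_one h2n]; exact hm1
      exact ⟨le_of_lt (lt_of_le_of_lt hl0 ht.1), le_trans (hAsub1 ht).2.le h1⟩
    have hfA : ∀ t ∈ A, f t = Sab := by
      intro t ht
      show (∑ k, a k * rademacher (k.1 + 1) t) = ∑ k, |a k|
      refine Finset.sum_congr rfl fun k _ => ?_
      rw [hI t (hAsub1 ht) k]
      by_cases h : a k < 0
      · simp [hεdef, h, abs_of_neg h]
      · simp [hεdef, h, abs_of_nonneg (not_lt.mp h)]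
    have hmuA : mu01 A = ENNReal.ofReal τ := by
      rw [mu01, Measure.restrict_apply measurableSet_Ioo,
        Set.inter_eq_left.mpr hAIcc, Real.volume_Ioo]
      congr 1; ring
    simp only [Kfun]
    refine le_iInf fun g => le_iInf fun h => le_iInf fun hf => ?_
    set H := eLpNormEssSup h mu01 with hHdef
    set S := ENNReal.ofReal Sab with hSdef
    set T := ENNReal.ofReal τ with hTdef
    have hof : ENNReal.ofReal (τ * Sab) = S * T := by
      rw [ENNReal.ofReal_mul hτ.le, mul_comm]
    have key1 : S * T ≤ (S - H) * T + H * T := by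
      rw [← add_mul]; exact mul_le_mul_left le_tsub_add _
    have hae : ∀ᵐ t ∂mu01.restrict A, S - H ≤ (‖g t‖₊ : ℝ≥0∞) := by
      filter_upwards [ae_restrict_mem measurableSet_Ioo,
        ae_restrict_of_ae (ae_le_eLpNormEssSup (f := h) (μ := mu01))] with t htA hth
      have hft : f t = Sab := hfA t htA
      have hfgh : f t = g t + h t := congrFun hf t
      have h1 : S ≤ (‖g t‖₊ : ℝ≥0∞) + H := by
        calc S = (‖f t‖₊ : ℝ≥0∞) := by
              rw [hft, hSdef, ← Real.enorm_eq_ofReal hSab0, enorm_eq_nnnorm]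
          _ ≤ (‖g t‖₊ : ℝ≥0∞) + (‖h t‖₊ : ℝ≥0∞) := by
              rw [hfgh]; exact_mod_cast nnnorm_add_le _ _
          _ ≤ (‖g t‖₊ : ℝ≥0∞) + H := add_le_add le_rfl hth
      exact tsub_le_iff_right.mpr h1
    have key2 : (S - H) * T ≤ eLpNorm g 1 mu01 := by
      calc (S - H) * T = (S - H) * mu01 A := by rw [hmuA]
        _ = ∫⁻ _ in A, (S - H) ∂mu01 := (setLIntegral_const A _).symm
        _ ≤ ∫⁻ t in A, (‖g t‖₊ : ℝ≥0∞) ∂mu01 := lintegral_mono_ae hae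
        _ ≤ ∫⁻ t, (‖g t‖₊ : ℝ≥0∞) ∂mu01 := setLIntegral_le_lintegral _ _
        _ = eLpNorm g 1 mu01 := (eLpNorm_one_eq_lintegral_enorm (f := g) (μ := mu01)).symm
    calc ENNReal.ofReal (τ * Sab) = S * T := hof
      _ ≤ (S - H) * T + H * T := key1
      _ ≤ eLpNorm g 1 mu01 + T * eLpNorm h ⊤ mu01 := by
          rw [eLpNorm_exponent_top, ← hHdef, mul_comm T H]
          exact add_le_add key2 le_rfl
end
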